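/- arXiv:2503.24004 — 3 statements merged into one kernel-verified Lean document; each statement's English description precedes it below -/
import Mathlib

section
/- Let (P₁,…,P_J) be a multivariate species sampling process with non-atomic base measure P₀, and let X be a sample from (P₁,…,P_J). Then for all j ≠ k in {1,…,J} and every Borel set A ⊆ 𝕏: Cov[P_j(A), P_k(A)] = ℙ(X_{j,1} = X_{k,1}) · P₀(A) · (1 − P₀(A)). -/
open MeasureTheory ProbabilityTheory
open scoped ENNReal

namespace MSSP

variable {Ω : Type*} [MeasurableSpace Ω] {𝕏 : Type*} [MeasurableSpace 𝕏]

/-- The species-sampling mixture measure `∑ₕ wₕ δ_{aₕ} + (1 - ∑ₕ wₕ) P₀`. -/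
noncomputable def mixM (P₀ : Measure 𝕏) (w : ℕ → ℝ) (a : ℕ → 𝕏) : Measure 𝕏 :=
  Measure.sum (fun h => ENNReal.ofReal (w h) • Measure.dirac (a h)) +
    ENNReal.ofReal (1 - ∑' h, w h) • P₀

/-- `(P j)_{j}` is a multivariate species sampling process with base measure `P₀`,
weight array `π` and atoms `θ`. -/
structure IsMSSPwith {ι : Type*} (Pr : Measure Ω) (P₀ : Measure 𝕏)
    (P : ι → Ω → Measure 𝕏) (π : ι → ℕ → Ω → ℝ) (θ : ℕ → Ω → 𝕏) : Prop where
  measP : ∀ j (A : Set 𝕏), MeasurableSet A → Measurable fun ω => P j ω A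
  probP : ∀ j ω, IsProbabilityMeasure (P j ω)
  measπ : ∀ j h, Measurable (π j h)
  subprob : ∀ j, ∀ᵐ ω ∂Pr, (∀ h, 0 ≤ π j h ω ∧ π j h ω ≤ 1) ∧ ∑' h, π j h ω ≤ 1
  measθ : ∀ h, Measurable (θ h)
  lawθ : ∀ h, Measure.map (θ h) Pr = P₀
  iidθ : iIndepFun θ Pr
  indepθπ : IndepFun (fun ω (h : ℕ) => θ h ω) (fun ω (j : ι) (h : ℕ) => π j h ω) Pr
  repr : ∀ j, ∀ᵐ ω ∂Pr, P j ω = mixM P₀ (fun h => π j h ω) (fun h => θ h ω)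

/-- `(P j)_j` is a multivariate species sampling process with base measure `P₀`. -/
def IsMSSP {ι : Type*} (Pr : Measure Ω) (P₀ : Measure 𝕏)
    (P : ι → Ω → Measure 𝕏) : Prop :=
  ∃ π θ, IsMSSPwith Pr P₀ P π θ

/-- `X` is a sample from the vector of random probability measures `P`:
conditionally on `P` the entries are independent, with `X j i` distributed as `P j`. -/
def IsSample {ι : Type*} (Pr : Measure Ω) (P : ι → Ω → Measure 𝕏)
    (X : ι → ℕ → Ω → 𝕏) : Prop :=
  (∀ j i, Measurable (X j i)) ∧
  ∀ (s : Finset (ι × ℕ)) (A : ι × ℕ → Set 𝕏), (∀ p ∈ s, MeasurableSet (A p)) →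
    Pr {ω | ∀ p ∈ s, X p.1 p.2 ω ∈ A p} = ∫⁻ ω, ∏ p ∈ s, P p.1 ω (A p) ∂Pr

/-- Covariance of two real random variables. -/
noncomputable def covR (Pr : Measure Ω) (f g : Ω → ℝ) : ℝ :=
  ∫ ω, f ω * g ω ∂Pr - (∫ ω, f ω ∂Pr) * (∫ ω, g ω ∂Pr)

/-- Correlation of two real random variables. -/
noncomputable def corrR (Pr : Measure Ω) (f g : Ω → ℝ) : ℝ :=
  covR Pr f g / (Real.sqrt (variance f Pr) * Real.sqrt (variance g Pr))



section Helpers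
variable {Ω : Type*} [MeasurableSpace Ω] {𝕏 : Type*} [MeasurableSpace 𝕏] {ι : Type*}

lemma mixM_apply (P₀ : Measure 𝕏) (w : ℕ → ℝ) (a : ℕ → 𝕏) {A : Set 𝕏} (hA : MeasurableSet A) :
    mixM P₀ w a A = (∑' h, ENNReal.ofReal (w h) * Measure.dirac (a h) A)
      + ENNReal.ofReal (1 - ∑' h, w h) * P₀ A := by
  simp [mixM, Measure.sum_apply _ hA]

lemma mixM_lintegral (P₀ : Measure 𝕏) (w : ℕ → ℝ) (a : ℕ → 𝕏) {f : 𝕏 → ℝ≥0∞}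
    (hf : Measurable f) :
    ∫⁻ x, f x ∂(mixM P₀ w a) = (∑' h, ENNReal.ofReal (w h) * f (a h))
      + ENNReal.ofReal (1 - ∑' h, w h) * ∫⁻ x, f x ∂P₀ := by
  simp [mixM, lintegral_add_measure, lintegral_sum_measure, lintegral_smul_measure,
    lintegral_dirac' _ hf]

variable [MeasurableSingletonClass 𝕏]

lemma mixM_summable (P₀ : Measure 𝕏) [IsProbabilityMeasure P₀] {w : ℕ → ℝ} {a : ℕ → 𝕏}
    (hprob : IsProbabilityMeasure (mixM P₀ w a)) :
    (∑' h, ENNReal.ofReal (w h)) + ENNReal.ofReal (1 - ∑' h, w h) = 1 := by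
  have h1 : mixM P₀ w a Set.univ = 1 := measure_univ
  rw [mixM_apply _ _ _ MeasurableSet.univ] at h1
  simpa using h1

lemma mixM_singleton (P₀ : Measure 𝕏) [NullSingletonClass P₀] (v : ℕ → ℝ) (t : ℕ → 𝕏) (x : 𝕏) :
    mixM P₀ v t {x} = ∑' l, ENNReal.ofReal (v l) * ({t l} : Set 𝕏).indicator 1 x := by
  rw [mixM_apply _ _ _ (measurableSet_singleton x), measure_singleton, mul_zero, add_zero]
  congr 1
  funext l
  congr 1
  rw [Measure.dirac_apply' _ (measurableSet_singleton x)]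
  by_cases heq : t l = x
  · simp [heq]
  · rw [Set.indicator_of_notMem (by simpa using heq),
      Set.indicator_of_notMem
        (by simp only [Set.mem_singleton_iff]; exact fun hh => heq hh.symm)]

lemma tie_mass (P₀ : Measure 𝕏) [IsProbabilityMeasure P₀] [NullSingletonClass P₀]
    (hD : MeasurableSet {p : 𝕏 × 𝕏 | p.1 = p.2}) (w v : ℕ → ℝ) (t : ℕ → 𝕏)
    (hdist : ∀ h l : ℕ, h ≠ l → t h ≠ t l)
    (hp : IsProbabilityMeasure (mixM P₀ v t)) :
    (mixM P₀ w t).prod (mixM P₀ v t) {p : 𝕏 × 𝕏 | p.1 = p.2}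
      = ∑' h, ENNReal.ofReal (w h) * ENNReal.ofReal (v h) := by
  haveI := hp
  set G : 𝕏 → ℝ≥0∞ := fun x => ∑' l, ENNReal.ofReal (v l) * ({t l} : Set 𝕏).indicator 1 x
    with hG
  have hGm : Measurable G :=
    Measurable.ennreal_tsum fun l =>
      (measurable_one.indicator (measurableSet_singleton _)).const_mul _
  have h1 : (mixM P₀ w t).prod (mixM P₀ v t) {p : 𝕏 × 𝕏 | p.1 = p.2}
      = ∫⁻ x, G x ∂(mixM P₀ w t) := by
    rw [Measure.prod_apply hD]
    refine lintegral_congr fun x => ?_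
    have hpre : (Prod.mk x ⁻¹' {p : 𝕏 × 𝕏 | p.1 = p.2}) = {x} := by
      ext y; simp [eq_comm]
    rw [hpre, mixM_singleton]
  rw [h1, mixM_lintegral _ _ _ hGm]
  have h2 : ∫⁻ x, G x ∂P₀ = 0 := by
    simp only [hG]
    rw [lintegral_tsum fun l =>
      ((measurable_one.indicator (measurableSet_singleton _)).const_mul _).aemeasurable]
    refine ENNReal.tsum_eq_zero.mpr fun l => ?_
    rw [lintegral_const_mul _ (measurable_one.indicator (measurableSet_singleton _))]
    rw [lintegral_indicator_one (measurableSet_singleton _), measure_singleton, mul_zero]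
  have h3 : ∀ h : ℕ, G (t h) = ENNReal.ofReal (v h) := by
    intro h
    simp only [hG]
    rw [tsum_eq_single h]
    · simp
    · intro l hl
      have : t h ∉ ({t l} : Set 𝕏) := by
        simp only [Set.mem_singleton_iff]
        exact fun hc => (hdist l h hl) hc.symm
      simp [Set.indicator_of_notMem this]
  rw [h2, mul_zero, add_zero]
  exact tsum_congr fun h => by rw [h3 h]

lemma measurable_eval {ι : Type*} (j : ι) (h : ℕ) :
    Measurable fun q : ι → ℕ → ℝ => q j h :=
  (measurable_pi_apply h).comp (measurable_pi_apply j)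

lemma ind_gen (Pr : Measure Ω) (θ : ℕ → Ω → 𝕏) (π : ι → ℕ → Ω → ℝ)
    (hmθ : ∀ h, Measurable (θ h)) (hmπ : ∀ j h, Measurable (π j h))
    (hind : IndepFun (fun ω (h : ℕ) => θ h ω) (fun ω (j : ι) (h : ℕ) => π j h ω) Pr)
    {F : (ℕ → 𝕏) → ℝ≥0∞} (hF : Measurable F) {G : (ι → ℕ → ℝ) → ℝ≥0∞} (hG : Measurable G) :
    ∫⁻ ω, G (fun j h => π j h ω) * F (fun h => θ h ω) ∂Pr
      = (∫⁻ ω, G (fun j h => π j h ω) ∂Pr) * ∫⁻ ω, F (fun h => θ h ω) ∂Pr := by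
  have hΘ : Measurable (fun ω (h : ℕ) => θ h ω) := measurable_pi_lambda _ hmθ
  have hP : Measurable (fun ω (j : ι) (h : ℕ) => π j h ω) :=
    measurable_pi_lambda _ (fun j => measurable_pi_lambda _ (fun h => hmπ j h))
  have h2 : IndepFun (fun ω => G (fun j h => π j h ω)) (fun ω => F (fun h => θ h ω)) Pr :=
    hind.symm.comp hG hF
  exact lintegral_mul_eq_lintegral_mul_lintegral_of_indepFun'' (hG.comp hP).aemeasurable
    (hF.comp hΘ).aemeasurable h2

lemma theta_law (Pr : Measure Ω) (P₀ : Measure 𝕏) (θ : ℕ → Ω → 𝕏)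
    (hmθ : ∀ h, Measurable (θ h)) (hlaw : ∀ h, Measure.map (θ h) Pr = P₀)
    {f : 𝕏 → ℝ≥0∞} (hf : Measurable f) (h : ℕ) :
    ∫⁻ ω, f (θ h ω) ∂Pr = ∫⁻ x, f x ∂P₀ := by
  rw [← hlaw h, lintegral_map hf (hmθ h)]

/-- one-theta independence computation -/

lemma theta_pair (Pr : Measure Ω) [IsProbabilityMeasure Pr] (P₀ : Measure 𝕏)
    (θ : ℕ → Ω → 𝕏)
    (hmθ : ∀ h, Measurable (θ h)) (hlaw : ∀ h, Measure.map (θ h) Pr = P₀)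
    (hiid : iIndepFun θ Pr)
    {f g : 𝕏 → ℝ≥0∞} (hf : Measurable f) (hg : Measurable g) {h l : ℕ} (hne : h ≠ l) :
    ∫⁻ ω, f (θ h ω) * g (θ l ω) ∂Pr = (∫⁻ x, f x ∂P₀) * ∫⁻ x, g x ∂P₀ := by
  have hi : IndepFun (θ h) (θ l) Pr := hiid.indepFun hne
  have h2 : IndepFun (fun ω => f (θ h ω)) (fun ω => g (θ l ω)) Pr :=
    hi.comp hf hg
  have h3 := lintegral_mul_eq_lintegral_mul_lintegral_of_indepFun''
    (hf.comp (hmθ h)).aemeasurable (hg.comp (hmθ l)).aemeasurable h2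
  rw [show (∫⁻ ω, f (θ h ω) * g (θ l ω) ∂Pr) = (∫⁻ ω, f (θ h ω) ∂Pr) * ∫⁻ ω, g (θ l ω) ∂Pr
    from h3, theta_law Pr P₀ θ hmθ hlaw hf, theta_law Pr P₀ θ hmθ hlaw hg]

lemma ind_one (Pr : Measure Ω) [IsProbabilityMeasure Pr] (P₀ : Measure 𝕏)
    (θ : ℕ → Ω → 𝕏) (π : ι → ℕ → Ω → ℝ)
    (hmθ : ∀ h, Measurable (θ h)) (hmπ : ∀ j h, Measurable (π j h))
    (hlaw : ∀ h, Measure.map (θ h) Pr = P₀)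
    (hind : IndepFun (fun ω (h : ℕ) => θ h ω) (fun ω (j : ι) (h : ℕ) => π j h ω) Pr)
    {f : 𝕏 → ℝ≥0∞} (hf : Measurable f) {G : (ι → ℕ → ℝ) → ℝ≥0∞} (hG : Measurable G) (h : ℕ) :
    ∫⁻ ω, G (fun j m => π j m ω) * f (θ h ω) ∂Pr
      = (∫⁻ ω, G (fun j m => π j m ω) ∂Pr) * ∫⁻ x, f x ∂P₀ := by
  have := ind_gen Pr θ π hmθ hmπ hind (F := fun t => f (t h)) (hf.comp (measurable_pi_apply h)) hG
  rw [this, theta_law Pr P₀ θ hmθ hlaw hf]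

lemma stepA (Pr : Measure Ω) [IsProbabilityMeasure Pr] (P₀ : Measure 𝕏)
    [IsProbabilityMeasure P₀]
    (θ : ℕ → Ω → 𝕏) (π : ι → ℕ → Ω → ℝ)
    (hmθ : ∀ h, Measurable (θ h)) (hmπ : ∀ j h, Measurable (π j h))
    (hlaw : ∀ h, Measure.map (θ h) Pr = P₀)
    (hind : IndepFun (fun ω (h : ℕ) => θ h ω) (fun ω (j : ι) (h : ℕ) => π j h ω) Pr)
    {A : Set 𝕏} (hA : MeasurableSet A) (j : ι) (Y : Ω → ℝ≥0∞)
    (hY : ∀ᵐ ω ∂Pr, Y ω = (∑' h, ENNReal.ofReal (π j h ω) * A.indicator 1 (θ h ω))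
        + (1 - ∑' h, ENNReal.ofReal (π j h ω)) * P₀ A)
    (hW : ∀ᵐ ω ∂Pr, (∑' h, ENNReal.ofReal (π j h ω)) ≤ 1) :
    ∫⁻ ω, Y ω ∂Pr = P₀ A := by
  have haT : P₀ A ≠ ⊤ := (measure_lt_top _ _).ne
  have hindAm : Measurable (A.indicator (1 : 𝕏 → ℝ≥0∞)) := measurable_one.indicator hA
  have hSm : Measurable fun ω => ∑' h, ENNReal.ofReal (π j h ω) * A.indicator 1 (θ h ω) :=
    Measurable.ennreal_tsum fun h => ((hmπ j h).ennreal_ofReal.mul (hindAm.comp (hmθ h)))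
  have hWm : Measurable fun ω => ∑' h, ENNReal.ofReal (π j h ω) :=
    Measurable.ennreal_tsum fun h => (hmπ j h).ennreal_ofReal
  rw [lintegral_congr_ae hY, lintegral_add_left hSm]
  -- E[S] = E[W] * P₀ A
  have hES : ∫⁻ ω, (∑' h, ENNReal.ofReal (π j h ω) * A.indicator 1 (θ h ω)) ∂Pr
      = (∫⁻ ω, (∑' h, ENNReal.ofReal (π j h ω)) ∂Pr) * P₀ A := by
    rw [lintegral_tsum (f := fun h ω => ENNReal.ofReal (π j h ω) * A.indicator 1 (θ h ω))
        (fun h => ((hmπ j h).ennreal_ofReal.mul (hindAm.comp (hmθ h))).aemeasurable),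
      lintegral_tsum (f := fun h ω => ENNReal.ofReal (π j h ω))
        (fun h => ((hmπ j h).ennreal_ofReal).aemeasurable),
      ← ENNReal.tsum_mul_right]
    refine tsum_congr fun h => ?_
    have h1 := ind_one Pr P₀ θ π hmθ hmπ hlaw hind (f := A.indicator 1) hindAm
      (G := fun q => ENNReal.ofReal (q j h)) (measurable_eval j h).ennreal_ofReal h
    rw [← lintegral_indicator_one hA]
    exact h1
  rw [hES, lintegral_mul_const' _ _ haT]
  -- E[1 - W] = 1 - E[W]
  have hEW : ∫⁻ ω, (∑' h, ENNReal.ofReal (π j h ω)) ∂Pr ≤ 1 := by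
    calc ∫⁻ ω, (∑' h, ENNReal.ofReal (π j h ω)) ∂Pr ≤ ∫⁻ _, 1 ∂Pr := lintegral_mono_ae hW
    _ = 1 := by simp
  have hsub : ∫⁻ ω, (1 - ∑' h, ENNReal.ofReal (π j h ω)) ∂Pr
      = 1 - ∫⁻ ω, (∑' h, ENNReal.ofReal (π j h ω)) ∂Pr := by
    rw [lintegral_sub hWm (hEW.trans_lt (by norm_num)).ne hW]
    simp
  rw [hsub, ← add_mul, add_tsub_cancel_of_le hEW, one_mul]

lemma stepB (Pr : Measure Ω) [IsProbabilityMeasure Pr] (P₀ : Measure 𝕏)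
    [IsProbabilityMeasure P₀]
    (θ : ℕ → Ω → 𝕏) (π : ι → ℕ → Ω → ℝ)
    (hmθ : ∀ h, Measurable (θ h)) (hmπ : ∀ j h, Measurable (π j h))
    (hlaw : ∀ h, Measure.map (θ h) Pr = P₀)
    (hiid : iIndepFun θ Pr)
    (hind : IndepFun (fun ω (h : ℕ) => θ h ω) (fun ω (j : ι) (h : ℕ) => π j h ω) Pr)
    {A : Set 𝕏} (hA : MeasurableSet A) (j k : ι) (Yj Yk : Ω → ℝ≥0∞)
    (hYj : ∀ᵐ ω ∂Pr, Yj ω = (∑' h, ENNReal.ofReal (π j h ω) * A.indicator 1 (θ h ω))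
        + (1 - ∑' h, ENNReal.ofReal (π j h ω)) * P₀ A)
    (hYk : ∀ᵐ ω ∂Pr, Yk ω = (∑' h, ENNReal.ofReal (π k h ω) * A.indicator 1 (θ h ω))
        + (1 - ∑' h, ENNReal.ofReal (π k h ω)) * P₀ A)
    (hWj : ∀ᵐ ω ∂Pr, (∑' h, ENNReal.ofReal (π j h ω)) ≤ 1)
    (hWk : ∀ᵐ ω ∂Pr, (∑' h, ENNReal.ofReal (π k h ω)) ≤ 1) :
    ∫⁻ ω, Yj ω * Yk ω ∂Pr = P₀ A * P₀ A
      + (P₀ A - P₀ A * P₀ A)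
        * ∫⁻ ω, (∑' h, ENNReal.ofReal (π j h ω) * ENNReal.ofReal (π k h ω)) ∂Pr := by
  set a : ℝ≥0∞ := P₀ A with ha
  have ha1 : a ≤ 1 := prob_le_one
  have haT : a ≠ ⊤ := (ha1.trans_lt (by norm_num)).ne
  have haaT : a * a ≠ ⊤ := ENNReal.mul_ne_top haT haT
  have haa : a * a ≤ a := by
    calc a * a ≤ 1 * a := mul_le_mul_left ha1 a
    _ = a := one_mul a
  have hindAm : Measurable (A.indicator (1 : 𝕏 → ℝ≥0∞)) := measurable_one.indicator hA
  have hii : ∀ x, A.indicator (1 : 𝕏 → ℝ≥0∞) x * A.indicator 1 x = A.indicator 1 x := by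
    intro x; by_cases hx : x ∈ A <;> simp [hx]
  have hiA : ∫⁻ x, A.indicator (1 : 𝕏 → ℝ≥0∞) x ∂P₀ = a := lintegral_indicator_one hA
  -- abbreviations
  set w : ι → ℕ → Ω → ℝ≥0∞ := fun j' h ω => ENNReal.ofReal (π j' h ω) with hw
  have hwm : ∀ j' h, Measurable (w j' h) := fun j' h => (hmπ j' h).ennreal_ofReal
  set S : ι → Ω → ℝ≥0∞ := fun j' ω => ∑' h, w j' h ω * A.indicator 1 (θ h ω) with hS
  set W : ι → Ω → ℝ≥0∞ := fun j' ω => ∑' h, w j' h ω with hW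
  have hSm : ∀ j', Measurable (S j') := fun j' =>
    Measurable.ennreal_tsum fun h => (hwm j' h).mul (hindAm.comp (hmθ h))
  have hWm : ∀ j', Measurable (W j') := fun j' => Measurable.ennreal_tsum fun h => hwm j' h
  have hCm : ∀ j', Measurable (fun ω => (1 - W j' ω) * a) := fun j' =>
    (measurable_const.sub (hWm j')).mul_const _
  -- the four pi-side integrals
  set QWW : ℝ≥0∞ := ∫⁻ ω, W j ω * W k ω ∂Pr with hQWW
  set QWC : ℝ≥0∞ := ∫⁻ ω, W j ω * (1 - W k ω) ∂Pr with hQWC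
  set QCW : ℝ≥0∞ := ∫⁻ ω, (1 - W j ω) * W k ω ∂Pr with hQCW
  set QCC : ℝ≥0∞ := ∫⁻ ω, (1 - W j ω) * (1 - W k ω) ∂Pr with hQCC
  set p : ℝ≥0∞ := ∫⁻ ω, (∑' h, w j h ω * w k h ω) ∂Pr with hp
  -- expansion
  have hsplit : ∫⁻ ω, Yj ω * Yk ω ∂Pr
      = (∫⁻ ω, S j ω * S k ω ∂Pr) + (∫⁻ ω, S j ω * ((1 - W k ω) * a) ∂Pr)
        + (∫⁻ ω, ((1 - W j ω) * a) * S k ω ∂Pr)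
        + ∫⁻ ω, ((1 - W j ω) * a) * ((1 - W k ω) * a) ∂Pr := by
    have hae : ∀ᵐ ω ∂Pr, Yj ω * Yk ω
        = S j ω * S k ω + S j ω * ((1 - W k ω) * a)
          + ((1 - W j ω) * a) * S k ω + ((1 - W j ω) * a) * ((1 - W k ω) * a) := by
      filter_upwards [hYj, hYk] with ω h1 h2
      rw [h1, h2]; ring
    rw [lintegral_congr_ae hae,
      lintegral_add_left (f := fun ω => S j ω * S k ω + S j ω * ((1 - W k ω) * a)
          + ((1 - W j ω) * a) * S k ω) (((hSm j).mul (hSm k)).add ((hSm j).mul (hCm k)) |>.add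
        ((hCm j).mul (hSm k))),
      lintegral_add_left (f := fun ω => S j ω * S k ω + S j ω * ((1 - W k ω) * a))
        (((hSm j).mul (hSm k)).add ((hSm j).mul (hCm k))),
      lintegral_add_left (f := fun ω => S j ω * S k ω) ((hSm j).mul (hSm k))]

  -- Q-sum
  have hQsum : QWW + QWC + QCW + QCC = 1 := by
    have hone : ∀ᵐ ω ∂Pr, W j ω * W k ω + W j ω * (1 - W k ω) + (1 - W j ω) * W k ω
        + (1 - W j ω) * (1 - W k ω) = 1 := by
      filter_upwards [hWj, hWk] with ω h1 h2
      have e1 : W k ω + (1 - W k ω) = 1 := add_tsub_cancel_of_le h2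
      have e2 : W j ω + (1 - W j ω) = 1 := add_tsub_cancel_of_le h1
      calc W j ω * W k ω + W j ω * (1 - W k ω) + (1 - W j ω) * W k ω
          + (1 - W j ω) * (1 - W k ω)
          = (W j ω + (1 - W j ω)) * (W k ω + (1 - W k ω)) := by ring
      _ = 1 := by rw [e1, e2, one_mul]
    have m1 : Measurable fun ω => W j ω * W k ω := (hWm j).mul (hWm k)
    have m2 : Measurable fun ω => W j ω * (1 - W k ω) :=
      (hWm j).mul (measurable_const.sub (hWm k))
    have m3 : Measurable fun ω => (1 - W j ω) * W k ω :=
      (measurable_const.sub (hWm j)).mul (hWm k)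
    rw [hQWW, hQWC, hQCW, hQCC, ← lintegral_add_left m1, ← lintegral_add_left
        (f := fun ω => W j ω * W k ω + W j ω * (1 - W k ω)) (m1.add m2),
      ← lintegral_add_left (f := fun ω => W j ω * W k ω
        + W j ω * (1 - W k ω) + (1 - W j ω) * W k ω) ((m1.add m2).add m3), lintegral_congr_ae hone]
    simp
  -- T4
  have hT4 : ∫⁻ ω, ((1 - W j ω) * a) * ((1 - W k ω) * a) ∂Pr = QCC * (a * a) := by
    have hpt : ∀ ω, ((1 - W j ω) * a) * ((1 - W k ω) * a)
        = ((1 - W j ω) * (1 - W k ω)) * (a * a) := fun ω => by ring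
    rw [lintegral_congr hpt, lintegral_mul_const' _ _ haaT, hQCC]
  -- T2
  have hT2 : ∫⁻ ω, S j ω * ((1 - W k ω) * a) ∂Pr = QWC * (a * a) := by
    have hpt : ∀ ω, S j ω * ((1 - W k ω) * a)
        = a * ∑' h, (w j h ω * (1 - W k ω)) * A.indicator 1 (θ h ω) := by
      intro ω
      simp only [hS]
      rw [← ENNReal.tsum_mul_right, ← ENNReal.tsum_mul_left]
      exact tsum_congr fun h => by ring
    have hmea : ∀ h, Measurable fun ω => (w j h ω * (1 - W k ω)) * A.indicator 1 (θ h ω) :=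
      fun h => ((hwm j h).mul (measurable_const.sub (hWm k))).mul (hindAm.comp (hmθ h))
    rw [lintegral_congr hpt, lintegral_const_mul' _ _ haT,
      lintegral_tsum (f := fun h ω => (w j h ω * (1 - W k ω)) * A.indicator 1 (θ h ω))
        (fun h => (hmea h).aemeasurable)]
    have hterm : ∀ h : ℕ, ∫⁻ ω, (w j h ω * (1 - W k ω)) * A.indicator 1 (θ h ω) ∂Pr
        = (∫⁻ ω, w j h ω * (1 - W k ω) ∂Pr) * a := by
      intro h
      rw [← hiA]
      exact ind_one Pr P₀ θ π hmθ hmπ hlaw hind hindAm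
        (G := fun q => ENNReal.ofReal (q j h) * (1 - ∑' m, ENNReal.ofReal (q k m)))
        ((measurable_eval j h).ennreal_ofReal.mul (measurable_const.sub
          (Measurable.ennreal_tsum fun m => (measurable_eval k m).ennreal_ofReal))) h
    have hQ : QWC = ∑' h, ∫⁻ ω, w j h ω * (1 - W k ω) ∂Pr := by
      rw [hQWC, lintegral_congr (fun ω => show W j ω * (1 - W k ω)
          = ∑' h, w j h ω * (1 - W k ω) from (ENNReal.tsum_mul_right).symm),
        lintegral_tsum (f := fun h ω => w j h ω * (1 - W k ω))
          (fun h => ((hwm j h).mul (measurable_const.sub (hWm k))).aemeasurable)]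
    rw [tsum_congr hterm, ENNReal.tsum_mul_right, ← hQ]
    ring
  -- T3
  have hT3 : ∫⁻ ω, ((1 - W j ω) * a) * S k ω ∂Pr = QCW * (a * a) := by
    have hpt : ∀ ω, ((1 - W j ω) * a) * S k ω
        = a * ∑' h, ((1 - W j ω) * w k h ω) * A.indicator 1 (θ h ω) := by
      intro ω
      simp only [hS]
      rw [← ENNReal.tsum_mul_left, ← ENNReal.tsum_mul_left]
      exact tsum_congr fun h => by ring
    have hmea : ∀ h, Measurable fun ω => ((1 - W j ω) * w k h ω) * A.indicator 1 (θ h ω) :=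
      fun h => ((measurable_const.sub (hWm j)).mul (hwm k h)).mul (hindAm.comp (hmθ h))
    rw [lintegral_congr hpt, lintegral_const_mul' _ _ haT,
      lintegral_tsum (f := fun h ω => ((1 - W j ω) * w k h ω) * A.indicator 1 (θ h ω))
        (fun h => (hmea h).aemeasurable)]
    have hterm : ∀ h : ℕ, ∫⁻ ω, ((1 - W j ω) * w k h ω) * A.indicator 1 (θ h ω) ∂Pr
        = (∫⁻ ω, (1 - W j ω) * w k h ω ∂Pr) * a := by
      intro h
      rw [← hiA]
      exact ind_one Pr P₀ θ π hmθ hmπ hlaw hind hindAm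
        (G := fun q => (1 - ∑' m, ENNReal.ofReal (q j m)) * ENNReal.ofReal (q k h))
        ((measurable_const.sub
          (Measurable.ennreal_tsum fun m => (measurable_eval j m).ennreal_ofReal)).mul
          (measurable_eval k h).ennreal_ofReal) h
    have hQ : QCW = ∑' h, ∫⁻ ω, (1 - W j ω) * w k h ω ∂Pr := by
      rw [hQCW, lintegral_congr (fun ω => show (1 - W j ω) * W k ω
          = ∑' h, (1 - W j ω) * w k h ω from (ENNReal.tsum_mul_left).symm),
        lintegral_tsum (f := fun h ω => (1 - W j ω) * w k h ω)
          (fun h => ((measurable_const.sub (hWm j)).mul (hwm k h)).aemeasurable)]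
    rw [tsum_congr hterm, ENNReal.tsum_mul_right, ← hQ]
    ring
  -- T1
  have hT1 : ∫⁻ ω, S j ω * S k ω ∂Pr = QWW * (a * a) + p * (a - a * a) := by
    have hpt : ∀ ω, S j ω * S k ω
        = ∑' (h : ℕ), ∑' (l : ℕ), (w j h ω * A.indicator 1 (θ h ω))
          * (w k l ω * A.indicator 1 (θ l ω)) := by
      intro ω
      simp only [hS]
      rw [← ENNReal.tsum_mul_right]
      exact tsum_congr fun h => (ENNReal.tsum_mul_left).symm
    have hmea : ∀ h l : ℕ, Measurable fun ω => (w j h ω * A.indicator 1 (θ h ω))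
        * (w k l ω * A.indicator 1 (θ l ω)) := fun h l =>
      ((hwm j h).mul (hindAm.comp (hmθ h))).mul ((hwm k l).mul (hindAm.comp (hmθ l)))
    rw [lintegral_congr hpt,
      lintegral_tsum (f := fun h ω => ∑' (l : ℕ), (w j h ω * A.indicator 1 (θ h ω))
          * (w k l ω * A.indicator 1 (θ l ω)))
        (fun h => (Measurable.ennreal_tsum fun l => hmea h l).aemeasurable)]
    have hin : ∀ h : ℕ, ∫⁻ ω, (∑' (l : ℕ), (w j h ω * A.indicator 1 (θ h ω))
          * (w k l ω * A.indicator 1 (θ l ω))) ∂Pr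
        = ∑' (l : ℕ), (∫⁻ ω, w j h ω * w k l ω ∂Pr) * (if h = l then a else a * a) := by
      intro h
      rw [lintegral_tsum (f := fun l ω => (w j h ω * A.indicator 1 (θ h ω))
          * (w k l ω * A.indicator 1 (θ l ω))) (fun l => (hmea h l).aemeasurable)]
      refine tsum_congr fun l => ?_
      by_cases hl : h = l
      · subst hl
        rw [if_pos rfl]
        have hpt2 : ∀ ω, (w j h ω * A.indicator 1 (θ h ω)) * (w k h ω * A.indicator 1 (θ h ω))
            = (w j h ω * w k h ω) * A.indicator 1 (θ h ω) := fun ω => by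
          rw [mul_mul_mul_comm, hii]
        rw [lintegral_congr hpt2, ← hiA]
        exact ind_one Pr P₀ θ π hmθ hmπ hlaw hind hindAm
          (G := fun q => ENNReal.ofReal (q j h) * ENNReal.ofReal (q k h))
          ((measurable_eval j h).ennreal_ofReal.mul (measurable_eval k h).ennreal_ofReal) h
      · rw [if_neg hl]
        have hpt2 : ∀ ω, (w j h ω * A.indicator 1 (θ h ω)) * (w k l ω * A.indicator 1 (θ l ω))
            = (w j h ω * w k l ω) * (A.indicator 1 (θ h ω) * A.indicator 1 (θ l ω)) :=
          fun ω => by ring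
        have h1 := ind_gen Pr θ π hmθ hmπ hind
          (F := fun t => A.indicator 1 (t h) * A.indicator 1 (t l))
          ((hindAm.comp (measurable_pi_apply h)).mul (hindAm.comp (measurable_pi_apply l)))
          (G := fun q => ENNReal.ofReal (q j h) * ENNReal.ofReal (q k l))
          ((measurable_eval j h).ennreal_ofReal.mul (measurable_eval k l).ennreal_ofReal)
        rw [lintegral_congr hpt2,
          show ∫⁻ ω, (w j h ω * w k l ω) * (A.indicator 1 (θ h ω) * A.indicator 1 (θ l ω)) ∂Pr
            = (∫⁻ ω, w j h ω * w k l ω ∂Pr)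
              * ∫⁻ ω, A.indicator 1 (θ h ω) * A.indicator 1 (θ l ω) ∂Pr from h1,
          show ∫⁻ ω, A.indicator 1 (θ h ω) * A.indicator 1 (θ l ω) ∂Pr = a * a from by
            rw [theta_pair Pr P₀ θ hmθ hlaw hiid hindAm hindAm hl, hiA]]
    rw [tsum_congr hin]
    have he : ∀ h l : ℕ, (∫⁻ ω, w j h ω * w k l ω ∂Pr) * (if h = l then a else a * a)
        = (∫⁻ ω, w j h ω * w k l ω ∂Pr) * (a * a)
          + (if h = l then (∫⁻ ω, w j h ω * w k h ω ∂Pr) * (a - a * a) else 0) := by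
      intro h l
      by_cases hl : h = l
      · subst hl
        rw [if_pos rfl, if_pos rfl, ← mul_add, add_tsub_cancel_of_le haa]
      · rw [if_neg hl, if_neg hl, add_zero]
    rw [tsum_congr fun h => tsum_congr fun l => he h l]
    have hsum2 : ∀ h : ℕ, ∑' (l : ℕ), ((∫⁻ ω, w j h ω * w k l ω ∂Pr) * (a * a)
          + (if h = l then (∫⁻ ω, w j h ω * w k h ω ∂Pr) * (a - a * a) else 0))
        = (∑' (l : ℕ), ∫⁻ ω, w j h ω * w k l ω ∂Pr) * (a * a)
          + (∫⁻ ω, w j h ω * w k h ω ∂Pr) * (a - a * a) := by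
      intro h
      rw [ENNReal.tsum_add, ENNReal.tsum_mul_right,
        tsum_eq_single h (fun l hl => if_neg (fun hc => hl hc.symm)), if_pos rfl]
    rw [tsum_congr hsum2, ENNReal.tsum_add, ENNReal.tsum_mul_right, ENNReal.tsum_mul_right]
    congr 1
    · congr 1
      rw [hQWW]
      have hpt3 : ∀ ω, W j ω * W k ω = ∑' (h : ℕ), ∑' (l : ℕ), w j h ω * w k l ω := by
        intro ω
        simp only [hW]
        rw [← ENNReal.tsum_mul_right]
        exact tsum_congr fun h => (ENNReal.tsum_mul_left).symm
      rw [lintegral_congr hpt3,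
        lintegral_tsum (f := fun h ω => ∑' (l : ℕ), w j h ω * w k l ω)
          (fun h => (Measurable.ennreal_tsum fun l => (hwm j h).mul (hwm k l)).aemeasurable)]
      exact tsum_congr fun h => (lintegral_tsum (f := fun l ω => w j h ω * w k l ω)
          (fun l => ((hwm j h).mul (hwm k l)).aemeasurable)).symm
    · congr 1
      rw [hp, lintegral_tsum (f := fun h ω => w j h ω * w k h ω)
        (fun h => ((hwm j h).mul (hwm k h)).aemeasurable)]
  rw [hsplit, hT1, hT2, hT3, hT4,
    show QWW * (a * a) + p * (a - a * a) + QWC * (a * a) + QCW * (a * a) + QCC * (a * a)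
      = (QWW + QWC + QCW + QCC) * (a * a) + (a - a * a) * p from by ring,
    hQsum, one_mul]


lemma distinct_atoms (Pr : Measure Ω) [IsProbabilityMeasure Pr] (P₀ : Measure 𝕏)
    [IsProbabilityMeasure P₀] [NullSingletonClass P₀] (θ : ℕ → Ω → 𝕏)
    (hD : MeasurableSet {p : 𝕏 × 𝕏 | p.1 = p.2})
    (hmθ : ∀ h, Measurable (θ h)) (hlaw : ∀ h, Measure.map (θ h) Pr = P₀)
    (hiid : iIndepFun θ Pr) :
    ∀ᵐ ω ∂Pr, ∀ h l : ℕ, h ≠ l → θ h ω ≠ θ l ω := by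
  rw [ae_all_iff]
  intro h
  rw [ae_all_iff]
  intro l
  by_cases hne : h = l
  · simp [hne]
  · have hmap : Pr.map (fun ω => (θ h ω, θ l ω)) = (Pr.map (θ h)).prod (Pr.map (θ l)) :=
      ((indepFun_iff_map_prod_eq_prod_map_map (hmθ h).aemeasurable
        (hmθ l).aemeasurable).mp (hiid.indepFun hne))
    rw [hlaw h, hlaw l] at hmap
    have key : Pr {ω | θ h ω = θ l ω} = 0 := by
      have h1 : Pr {ω | θ h ω = θ l ω} = (P₀.prod P₀) {p : 𝕏 × 𝕏 | p.1 = p.2} := by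
        rw [← hmap, Measure.map_apply ((hmθ h).prodMk (hmθ l)) hD]
        rfl
      have hz : (P₀.prod P₀) {p : 𝕏 × 𝕏 | p.1 = p.2} = 0 := by
        rw [Measure.prod_apply hD]
        have h2 : ∀ x : 𝕏, P₀ (Prod.mk x ⁻¹' {p : 𝕏 × 𝕏 | p.1 = p.2}) = 0 := by
          intro x
          have h3 : (Prod.mk x ⁻¹' {p : 𝕏 × 𝕏 | p.1 = p.2}) = {x} := by
            ext y; simp [eq_comm]
          rw [h3]; exact measure_singleton x
        simp [h2]
      rw [h1, hz]
    rw [ae_iff]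
    convert key using 2
    ext ω
    simp [hne]


omit [MeasurableSingletonClass 𝕏] in
lemma stepC {ι : Type*} [StandardBorelSpace 𝕏]
    (Pr : Measure Ω) [IsProbabilityMeasure Pr] (P₀ : Measure 𝕏) [IsProbabilityMeasure P₀]
    [NullSingletonClass P₀] (P : ι → Ω → Measure 𝕏) (π : ι → ℕ → Ω → ℝ) (θ : ℕ → Ω → 𝕏)
    (hM : IsMSSPwith Pr P₀ P π θ) (X : ι → ℕ → Ω → 𝕏) (hX : IsSample Pr P X)
    (j k : ι) (hjk : j ≠ k) :
    Pr {ω | X j 0 ω = X k 0 ω}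
      = ∫⁻ ω, (∑' h, ENNReal.ofReal (π j h ω) * ENNReal.ofReal (π k h ω)) ∂Pr := by
  classical
  letI := upgradeStandardBorel 𝕏
  have hD : MeasurableSet {p : 𝕏 × 𝕏 | p.1 = p.2} :=
    MeasureTheory.StronglyMeasurable.measurableSet_eq_fun
      (measurable_fst.stronglyMeasurable) (measurable_snd.stronglyMeasurable)
  have hdist : ∀ᵐ ω ∂Pr, ∀ h l : ℕ, h ≠ l → θ h ω ≠ θ l ω :=
    distinct_atoms Pr P₀ θ hD hM.measθ hM.lawθ hM.iidθ
  -- the kernel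
  set KP : Kernel Ω 𝕏 := ⟨P j, Measure.measurable_of_measurable_coe _ (fun s hs => hM.measP j s hs)⟩
  set KQ : Kernel Ω 𝕏 := ⟨P k, Measure.measurable_of_measurable_coe _ (fun s hs => hM.measP k s hs)⟩
  haveI : IsMarkovKernel KP := ⟨fun ω => hM.probP j ω⟩
  haveI : IsMarkovKernel KQ := ⟨fun ω => hM.probP k ω⟩
  have hmeas : Measurable (fun ω => (P j ω).prod (P k ω)) := by
    have h1 := (KP ×ₖ KQ).measurable
    have h2 : ⇑(KP ×ₖ KQ) = fun ω => (P j ω).prod (P k ω) := by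
      funext ω; rw [Kernel.prod_apply]; rfl
    rwa [h2] at h1
  set ν : Measure (𝕏 × 𝕏) := Pr.bind (fun ω => (P j ω).prod (P k ω)) with hν
  have hpairm : Measurable (fun ω => (X j 0 ω, X k 0 ω)) := (hX.1 j 0).prodMk (hX.1 k 0)
  set μ : Measure (𝕏 × 𝕏) := Pr.map (fun ω => (X j 0 ω, X k 0 ω)) with hμ
  haveI : IsProbabilityMeasure μ := Measure.isProbabilityMeasure_map hpairm.aemeasurable
  -- μ = ν
  have hμν : μ = ν := by
    refine ext_of_generate_finite _ generateFrom_prod.symm isPiSystem_prod ?_ ?_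
    · rintro s ⟨s1, hs1, s2, hs2, rfl⟩
      simp only [Set.mem_setOf_eq] at hs1 hs2
      have hL : μ (s1 ×ˢ s2) = Pr {ω | X j 0 ω ∈ s1 ∧ X k 0 ω ∈ s2} := by
        rw [hμ, Measure.map_apply hpairm (hs1.prod hs2)]
        rfl
      have hR : ν (s1 ×ˢ s2) = ∫⁻ ω, P j ω s1 * P k ω s2 ∂Pr := by
        rw [hν, Measure.bind_apply (hs1.prod hs2) hmeas.aemeasurable]
        refine lintegral_congr fun ω => ?_
        haveI := hM.probP j ω
        haveI := hM.probP k ω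
        rw [Measure.prod_prod]
      set F : ι × ℕ → Set 𝕏 := fun p => if p = (j,0) then s1 else if p = (k,0) then s2
        else Set.univ with hF
      have hne : ((j,0) : ι × ℕ) ≠ (k,0) := by simp [hjk]
      have hFm : ∀ p ∈ ({(j,0), (k,0)} : Finset (ι × ℕ)), MeasurableSet (F p) := by
        intro p _
        simp only [hF]
        split_ifs <;> first | exact hs1 | exact hs2 | exact MeasurableSet.univ
      have hsample := hX.2 ({(j,0), (k,0)} : Finset (ι × ℕ)) F hFm
      have hset : {ω | ∀ p ∈ ({(j,0), (k,0)} : Finset (ι × ℕ)), X p.1 p.2 ω ∈ F p}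
          = {ω | X j 0 ω ∈ s1 ∧ X k 0 ω ∈ s2} := by
        ext ω
        simp only [Finset.mem_insert, Finset.mem_singleton, Set.mem_setOf_eq]
        constructor
        · intro hp
          refine ⟨?_, ?_⟩
          · have := hp (j,0) (Or.inl rfl)
            simpa [hF] using this
          · have := hp (k,0) (Or.inr rfl)
            simpa [hF, hne.symm] using this
        · rintro ⟨h1, h2⟩ p hp
          rcases hp with rfl | rfl
          · simpa [hF] using h1
          · simpa [hF, hne.symm] using h2
      have hprod : ∀ ω, (∏ p ∈ ({(j,0), (k,0)} : Finset (ι × ℕ)), P p.1 ω (F p))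
          = P j ω s1 * P k ω s2 := by
        intro ω
        rw [Finset.prod_pair hne]
        simp [hF, hne.symm]
      rw [hL, hR, ← hset, hsample]
      exact lintegral_congr fun ω => by rw [hprod ω]
    · rw [hν, Measure.bind_apply MeasurableSet.univ hmeas.aemeasurable]
      have : ∀ ω, ((P j ω).prod (P k ω)) Set.univ = 1 := by
        intro ω
        haveI := hM.probP j ω
        haveI := hM.probP k ω
        simp
      simp only [this, measure_univ, lintegral_one, mul_one]
  -- conclude
  have hkey : Pr {ω | X j 0 ω = X k 0 ω} = ν {p : 𝕏 × 𝕏 | p.1 = p.2} := by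
    rw [← hμν, hμ, Measure.map_apply hpairm hD]
    rfl
  rw [hkey, hν, Measure.bind_apply hD hmeas.aemeasurable]
  refine lintegral_congr_ae ?_
  filter_upwards [hM.repr j, hM.repr k, hdist] with ω h1 h2 h3
  haveI hpk : IsProbabilityMeasure (mixM P₀ (fun h => π k h ω) (fun h => θ h ω)) :=
    h2 ▸ hM.probP k ω
  rw [h1, h2]
  exact tie_mass P₀ hD _ _ _ h3 hpk


end Helpers

/-- For a multivariate species sampling process, the covariance of `P j (A)` and
`P k (A)` (for `j ≠ k`) equals the across-group tie probability times `P₀ A (1 - P₀ A)`. -/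
theorem mSSP_covariance {Ω : Type*} [MeasurableSpace Ω] {𝕏 : Type*} [MeasurableSpace 𝕏]
    [StandardBorelSpace 𝕏] {ι : Type*}
    (Pr : Measure Ω) [IsProbabilityMeasure Pr]
    (P₀ : Measure 𝕏) [IsProbabilityMeasure P₀] [NullSingletonClass P₀]
    (P : ι → Ω → Measure 𝕏) (hP : IsMSSP Pr P₀ P)
    (X : ι → ℕ → Ω → 𝕏) (hX : IsSample Pr P X)
    (j k : ι) (hjk : j ≠ k) (A : Set 𝕏) (hA : MeasurableSet A) :
    covR Pr (fun ω => (P j ω A).toReal) (fun ω => (P k ω A).toReal)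
      = (Pr {ω | X j 0 ω = X k 0 ω}).toReal * (P₀ A).toReal * (1 - (P₀ A).toReal) := by
  obtain ⟨π, θ, hM⟩ := hP
  -- a.e. representation facts
  have hrep : ∀ j' : ι, (∀ᵐ ω ∂Pr, P j' ω A
        = (∑' h, ENNReal.ofReal (π j' h ω) * A.indicator 1 (θ h ω))
          + (1 - ∑' h, ENNReal.ofReal (π j' h ω)) * P₀ A)
      ∧ (∀ᵐ ω ∂Pr, (∑' h, ENNReal.ofReal (π j' h ω)) ≤ 1) := by
    intro j'
    have key : ∀ᵐ ω ∂Pr, (P j' ω A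
        = (∑' h, ENNReal.ofReal (π j' h ω) * A.indicator 1 (θ h ω))
          + (1 - ∑' h, ENNReal.ofReal (π j' h ω)) * P₀ A)
        ∧ (∑' h, ENNReal.ofReal (π j' h ω)) ≤ 1 := by
      filter_upwards [hM.repr j'] with ω h1
      haveI : IsProbabilityMeasure (mixM P₀ (fun h => π j' h ω) (fun h => θ h ω)) :=
        h1 ▸ hM.probP j' ω
      have htot := mixM_summable P₀ (w := fun h => π j' h ω) (a := fun h => θ h ω) this
      have hWle : (∑' h, ENNReal.ofReal (π j' h ω)) ≤ 1 :=
        (self_le_add_right _ _).trans (le_of_eq htot)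
      have hWT : (∑' h, ENNReal.ofReal (π j' h ω)) ≠ ⊤ :=
        (hWle.trans_lt (by norm_num)).ne
      have hofr : ENNReal.ofReal (1 - ∑' h, π j' h ω)
          = 1 - ∑' h, ENNReal.ofReal (π j' h ω) := by
        refine ENNReal.eq_sub_of_add_eq hWT ?_
        rw [add_comm]
        exact htot
      refine ⟨?_, hWle⟩
      rw [h1, mixM_apply _ _ _ hA, hofr]
      congr 1
      refine tsum_congr fun h => ?_
      rw [Measure.dirac_apply' _ hA]
    exact ⟨key.mono fun ω h => h.1, key.mono fun ω h => h.2⟩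
  -- the three expectations
  have hEj : ∫⁻ ω, P j ω A ∂Pr = P₀ A :=
    stepA Pr P₀ θ π hM.measθ hM.measπ hM.lawθ hM.indepθπ hA j _ (hrep j).1 (hrep j).2
  have hEk : ∫⁻ ω, P k ω A ∂Pr = P₀ A :=
    stepA Pr P₀ θ π hM.measθ hM.measπ hM.lawθ hM.indepθπ hA k _ (hrep k).1 (hrep k).2
  have hEjk : ∫⁻ ω, P j ω A * P k ω A ∂Pr = P₀ A * P₀ A
      + (P₀ A - P₀ A * P₀ A)
        * ∫⁻ ω, (∑' h, ENNReal.ofReal (π j h ω) * ENNReal.ofReal (π k h ω)) ∂Pr :=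
    stepB Pr P₀ θ π hM.measθ hM.measπ hM.lawθ hM.iidθ hM.indepθπ hA j k _ _
      (hrep j).1 (hrep k).1 (hrep j).2 (hrep k).2
  have htie : Pr {ω | X j 0 ω = X k 0 ω}
      = ∫⁻ ω, (∑' h, ENNReal.ofReal (π j h ω) * ENNReal.ofReal (π k h ω)) ∂Pr :=
    stepC Pr P₀ P π θ hM X hX j k hjk
  set p : ℝ≥0∞ := ∫⁻ ω, (∑' h, ENNReal.ofReal (π j h ω) * ENNReal.ofReal (π k h ω)) ∂Pr
    with hpd
  have hp1 : p ≤ 1 := by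
    rw [← htie]
    exact prob_le_one
  have hpT : p ≠ ⊤ := (hp1.trans_lt (by norm_num)).ne
  have ha1 : P₀ A ≤ 1 := prob_le_one
  have haT : P₀ A ≠ ⊤ := (ha1.trans_lt (by norm_num)).ne
  have haaT : P₀ A * P₀ A ≠ ⊤ := ENNReal.mul_ne_top haT haT
  have haa : P₀ A * P₀ A ≤ P₀ A := by
    calc P₀ A * P₀ A ≤ 1 * P₀ A := mul_le_mul_left ha1 _
    _ = P₀ A := one_mul _
  -- measurability / integrability for Bochner integrals
  have hfm : ∀ j' : ι, AEMeasurable (fun ω => P j' ω A) Pr :=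
    fun j' => (hM.measP j' A hA).aemeasurable
  have hffin : ∀ j' : ι, ∀ᵐ ω ∂Pr, P j' ω A < ⊤ := by
    intro j'
    refine Filter.Eventually.of_forall fun ω => ?_
    haveI := hM.probP j' ω
    exact measure_lt_top _ _
  have hIj : ∫ ω, (P j ω A).toReal ∂Pr = (P₀ A).toReal := by
    rw [integral_toReal (hfm j) (hffin j), hEj]
  have hIk : ∫ ω, (P k ω A).toReal ∂Pr = (P₀ A).toReal := by
    rw [integral_toReal (hfm k) (hffin k), hEk]
  have hIjk : ∫ ω, (P j ω A).toReal * (P k ω A).toReal ∂Pr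
      = (P₀ A * P₀ A + (P₀ A - P₀ A * P₀ A) * p).toReal := by
    have h1 : (fun ω => (P j ω A).toReal * (P k ω A).toReal)
        = fun ω => ((P j ω A) * (P k ω A)).toReal := by
      funext ω; rw [ENNReal.toReal_mul]
    rw [h1, integral_toReal (f := fun ω => P j ω A * P k ω A) ((hfm j).mul (hfm k)) ?_, hEjk]
    filter_upwards [hffin j, hffin k] with ω h2 h3
    exact ENNReal.mul_lt_top h2 h3
  rw [covR, hIj, hIk, hIjk, htie]
  have hsubT : (P₀ A - P₀ A * P₀ A) * p ≠ ⊤ :=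
    ENNReal.mul_ne_top ((tsub_le_self.trans_lt (haT.lt_top)).ne) hpT
  rw [ENNReal.toReal_add haaT hsubT, ENNReal.toReal_mul, ENNReal.toReal_mul,
    ENNReal.toReal_sub_of_le haa haT, ENNReal.toReal_mul]
  ring

end MSSP
end

section
/- Let (P₁,…,P_J) be a multivariate species sampling process with non-atomic base measure P₀ and weight array π, and let X be a sample from (P₁,…,P_J). Then for all j ≠ k in {1,…,J} and every Borel set A with Var[P_j(A)] > 0 and Var[P_k(A)] > 0: (i) Corr[P_j(A), P_k(A)] ≥ 0; (ii) Corr[P_j(A), P_k(A)] = 0 if and only if ℙ(X_{j,1} = X_{k,1}) = 0, if and only if E[π_{j,h} π_{k,h}] = 0 for every h ≥ 1; (iii) if ℙ(X_{j,1} = X_{j,2}) = ℙ(X_{k,1} = X_{k,2}) > 0, then Corr[P_j(A), P_k(A)] = ℙ(X_{j,1} = X_{k,1}) / ℙ(X_{j,1} = X_{j,2}). -/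
open MeasureTheory ProbabilityTheory
open scoped ENNReal

namespace MSSP

variable {Ω : Type*} [MeasurableSpace Ω] {𝕏 : Type*} [MeasurableSpace 𝕏]

section Aux
variable {ι : Type*} {Pr : Measure Ω} {P₀ : Measure 𝕏} {P : ι → Ω → Measure 𝕏}
  {π : ι → ℕ → Ω → ℝ} {θ : ℕ → Ω → 𝕏}
noncomputable def W (π : ι → ℕ → Ω → ℝ) (j : ι) (h : ℕ) (ω : Ω) : ℝ≥0∞ :=
  ENNReal.ofReal (π j h ω)
noncomputable def SS (π : ι → ℕ → Ω → ℝ) (j : ι) (ω : Ω) : ℝ≥0∞ := ∑' h, W π j h ω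
noncomputable def CC (π : ι → ℕ → Ω → ℝ) (j : ι) (ω : Ω) : ℝ≥0∞ := 1 - SS π j ω
noncomputable def chi (θ : ℕ → Ω → 𝕏) (A : Set 𝕏) (h : ℕ) (ω : Ω) : ℝ≥0∞ :=
  A.indicator 1 (θ h ω)
lemma measW (hP : IsMSSPwith Pr P₀ P π θ) (j : ι) (h : ℕ) : Measurable (W π j h) :=
  (hP.measπ j h).ennreal_ofReal
lemma measSS (hP : IsMSSPwith Pr P₀ P π θ) (j : ι) : Measurable (SS π j) :=
  Measurable.ennreal_tsum fun h => measW hP j h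
lemma measCC (hP : IsMSSPwith Pr P₀ P π θ) (j : ι) : Measurable (CC π j) :=
  measurable_const.sub (measSS hP j)
lemma measChi (hP : IsMSSPwith Pr P₀ P π θ) {A : Set 𝕏} (hA : MeasurableSet A) (h : ℕ) :
    Measurable (chi θ A h) := (measurable_one.indicator hA).comp (hP.measθ h)
lemma mass_eq [IsProbabilityMeasure P₀] (hP : IsMSSPwith Pr P₀ P π θ) (j : ι) :
    ∀ᵐ ω ∂Pr, SS π j ω + ENNReal.ofReal (1 - ∑' h, π j h ω) = 1 := by
  filter_upwards [hP.repr j] with ω hω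
  have h1 : (P j ω) Set.univ = 1 := (hP.probP j ω).measure_univ
  rw [hω] at h1
  simpa [mixM, Measure.sum_apply _ MeasurableSet.univ, Measure.smul_apply, SS, W,
    smul_eq_mul] using h1
lemma SS_le_one [IsProbabilityMeasure P₀] (hP : IsMSSPwith Pr P₀ P π θ) (j : ι) :
    ∀ᵐ ω ∂Pr, SS π j ω ≤ 1 := by
  filter_upwards [mass_eq hP j] with ω hω
  exact le_of_le_of_eq (self_le_add_right _ _) hω
lemma CC_eq [IsProbabilityMeasure P₀] (hP : IsMSSPwith Pr P₀ P π θ) (j : ι) :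
    ∀ᵐ ω ∂Pr, ENNReal.ofReal (1 - ∑' h, π j h ω) = CC π j ω := by
  filter_upwards [mass_eq hP j] with ω hω
  have hS : SS π j ω ≠ ∞ := by
    intro h; rw [h] at hω; simp at hω
  rw [CC, ← hω, ENNReal.add_sub_cancel_left hS]
/-- pointwise representation of `P j ω A` -/
lemma apply_eq [IsProbabilityMeasure P₀] (hP : IsMSSPwith Pr P₀ P π θ) (j : ι)
    {A : Set 𝕏} (hA : MeasurableSet A) :
    ∀ᵐ ω ∂Pr, P j ω A = (∑' h, W π j h ω * chi θ A h ω) + CC π j ω * P₀ A := by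
  filter_upwards [hP.repr j, CC_eq hP j] with ω hω hC
  rw [hω, ← hC]
  simp [mixM, Measure.sum_apply _ hA, Measure.smul_apply, smul_eq_mul,
    Measure.dirac_apply' _ hA, W, chi]
/-- expectation of chi -/
lemma Echi [IsProbabilityMeasure Pr] (hP : IsMSSPwith Pr P₀ P π θ) {A : Set 𝕏}
    (hA : MeasurableSet A) (h : ℕ) : ∫⁻ ω, chi θ A h ω ∂Pr = P₀ A := by
  have : ∫⁻ ω, chi θ A h ω ∂Pr = ∫⁻ x, A.indicator 1 x ∂(Measure.map (θ h) Pr) := by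
    rw [lintegral_map (measurable_one.indicator hA) (hP.measθ h)]; rfl
  rw [this, hP.lawθ h, lintegral_indicator_one hA]
/-- independence of a π-functional and a θ-functional -/
lemma indep_lint (hP : IsMSSPwith Pr P₀ P π θ) (φ : (ι → ℕ → ℝ) → ℝ≥0∞)
    (ψ : (ℕ → 𝕏) → ℝ≥0∞) (hφ : Measurable φ) (hψ : Measurable ψ) :
    ∫⁻ ω, φ (fun j h => π j h ω) * ψ (fun h => θ h ω) ∂Pr
      = (∫⁻ ω, φ (fun j h => π j h ω) ∂Pr) * ∫⁻ ω, ψ (fun h => θ h ω) ∂Pr := by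
  have hπm : Measurable (fun ω (j : ι) (h : ℕ) => π j h ω) :=
    measurable_pi_lambda _ fun j => measurable_pi_lambda _ fun h => hP.measπ j h
  have hθm : Measurable (fun ω (h : ℕ) => θ h ω) :=
    measurable_pi_lambda _ fun h => hP.measθ h
  have h1 : IndepFun (fun ω => φ (fun j h => π j h ω)) (fun ω => ψ (fun h => θ h ω)) Pr :=
    (hP.indepθπ.comp hψ hφ).symm
  exact lintegral_mul_eq_lintegral_mul_lintegral_of_indepFun'' (hφ.comp hπm).aemeasurable
    (hψ.comp hθm).aemeasurable h1
/-- expectation of a product of two chis -/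
lemma Echichi [IsProbabilityMeasure Pr] [IsProbabilityMeasure P₀]
    (hP : IsMSSPwith Pr P₀ P π θ) {A : Set 𝕏} (hA : MeasurableSet A) (h l : ℕ) :
    ∫⁻ ω, chi θ A h ω * chi θ A l ω ∂Pr
      = P₀ A * P₀ A + (if h = l then P₀ A - P₀ A * P₀ A else 0) := by
  rcases eq_or_ne h l with rfl | hne
  · have hsq : ∀ ω, chi θ A h ω * chi θ A h ω = chi θ A h ω := by
      intro ω
      by_cases hm : θ h ω ∈ A <;>
        simp [chi, Set.indicator_of_mem, Set.indicator_of_notMem, hm]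
    have hle : P₀ A * P₀ A ≤ P₀ A :=
      calc P₀ A * P₀ A ≤ 1 * P₀ A := mul_le_mul_left prob_le_one _
      _ = P₀ A := one_mul _
    simp only [if_pos rfl, if_true]
    rw [add_comm, tsub_add_cancel_of_le hle]
    simp only [hsq]
    exact Echi hP hA h
  · have hind : IndepFun (chi θ A h) (chi θ A l) Pr := by
      have := (hP.iidθ.indepFun hne).comp (φ := A.indicator (1 : 𝕏 → ℝ≥0∞))
        (ψ := A.indicator (1 : 𝕏 → ℝ≥0∞)) (measurable_one.indicator hA)
        (measurable_one.indicator hA)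
      exact this
    rw [if_neg hne, add_zero,
      lintegral_mul_eq_lintegral_mul_lintegral_of_indepFun'' (measChi hP hA h).aemeasurable
        (measChi hP hA l).aemeasurable hind, Echi hP hA h, Echi hP hA l]

/-- mean of `P j · A` -/
lemma Emean [IsProbabilityMeasure Pr] [IsProbabilityMeasure P₀]
    (hP : IsMSSPwith Pr P₀ P π θ) (j : ι) {A : Set 𝕏} (hA : MeasurableSet A) :
    ∫⁻ ω, P j ω A ∂Pr = P₀ A := by
  have mW : ∀ h, Measurable (W π j h) := measW hP j
  have mChi : ∀ h, Measurable (chi θ A h) := measChi hP hA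
  rw [lintegral_congr_ae (apply_eq hP j hA)]
  rw [lintegral_add_right _ ((measCC hP j).mul_const _)]
  rw [lintegral_tsum (fun h => ((mW h).fun_mul (mChi h)).aemeasurable)]
  rw [lintegral_mul_const _ (measCC hP j)]
  have hterm : ∀ h, ∫⁻ ω, W π j h ω * chi θ A h ω ∂Pr
      = (∫⁻ ω, W π j h ω ∂Pr) * P₀ A := by
    intro h
    have := indep_lint hP (fun a => ENNReal.ofReal (a j h))
      (fun x => A.indicator 1 (x h))
      (((measurable_pi_apply h).comp (measurable_pi_apply j)).ennreal_ofReal)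
      ((measurable_one.indicator hA).comp (measurable_pi_apply h))
    rw [show (∫⁻ ω, W π j h ω * chi θ A h ω ∂Pr) = ∫⁻ ω,
      (fun a : ι → ℕ → ℝ => ENNReal.ofReal (a j h)) (fun j h => π j h ω) *
      (fun x : ℕ → 𝕏 => A.indicator 1 (x h)) (fun h => θ h ω) ∂Pr from rfl, this]
    rw [show (∫⁻ ω, (fun x : ℕ → 𝕏 => A.indicator 1 (x h)) (fun h => θ h ω) ∂Pr)
      = ∫⁻ ω, chi θ A h ω ∂Pr from rfl, Echi hP hA h]
    rfl
  simp_rw [hterm]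
  rw [ENNReal.tsum_mul_right, ← add_mul, ← lintegral_tsum (fun h => (mW h).aemeasurable)]
  have : ∫⁻ ω, (∑' h, W π j h ω) ∂Pr + ∫⁻ ω, CC π j ω ∂Pr = 1 := by
    show ∫⁻ ω, SS π j ω ∂Pr + ∫⁻ ω, CC π j ω ∂Pr = 1
    rw [← lintegral_add_left (measSS hP j)]
    have : ∫⁻ ω, (SS π j ω + CC π j ω) ∂Pr = ∫⁻ _, (1:ℝ≥0∞) ∂Pr := by
      refine lintegral_congr_ae ?_
      filter_upwards [SS_le_one hP j] with ω hω
      rw [CC, add_tsub_cancel_of_le hω]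
    rw [this, lintegral_one, measure_univ]
  rw [this, one_mul]


/-- algebra: expansion of the product of two mixtures -/
lemma expand_mul (a c : ℕ → ℝ≥0∞) (b d : ℝ≥0∞) :
    ((∑' h, a h) + b) * ((∑' l, c l) + d)
      = (∑' h, ∑' l, a h * c l)
        + ((∑' h, a h) * d + (b * (∑' l, c l) + b * d)) := by
  have e1 : (∑' h, a h) * (∑' l, c l) = ∑' h, ∑' l, a h * c l := by
    rw [← ENNReal.tsum_mul_right]
    exact tsum_congr fun h => ENNReal.tsum_mul_left.symm
  calc ((∑' h, a h) + b) * ((∑' l, c l) + d)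
      = (∑' h, a h) * (∑' l, c l)
        + ((∑' h, a h) * d + (b * (∑' l, c l) + b * d)) := by ring
    _ = _ := by rw [e1]

/-- second moment formula -/
lemma Emul [IsProbabilityMeasure Pr] [IsProbabilityMeasure P₀]
    (hP : IsMSSPwith Pr P₀ P π θ) (j k : ι) {A : Set 𝕏} (hA : MeasurableSet A) :
    ∫⁻ ω, P j ω A * P k ω A ∂Pr
      = P₀ A * P₀ A + (P₀ A - P₀ A * P₀ A) *
          ∑' h, ∫⁻ ω, W π j h ω * W π k h ω ∂Pr := by
  set q := P₀ A with hq
  have mW : ∀ (j : ι) (h : ℕ), Measurable (W π j h) := measW hP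
  have mChi : ∀ h, Measurable (chi θ A h) := measChi hP hA
  have mWchi : ∀ (j : ι) (h : ℕ), Measurable (fun ω => W π j h ω * chi θ A h ω) :=
    fun j h => (mW j h).fun_mul (mChi h)
  have mSum : ∀ (j : ι), Measurable (fun ω => ∑' h, W π j h ω * chi θ A h ω) :=
    fun j => Measurable.ennreal_tsum fun h => mWchi j h
  have mdtsum : Measurable (fun ω => ∑' (h : ℕ), ∑' (l : ℕ),
      (W π j h ω * chi θ A h ω) * (W π k l ω * chi θ A l ω)) :=
    Measurable.ennreal_tsum fun h => Measurable.ennreal_tsum fun l =>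
      (mWchi j h).fun_mul (mWchi k l)
  -- measurability of φ-functionals on the π-array
  have mEval : ∀ (j : ι) (h : ℕ), Measurable (fun a : ι → ℕ → ℝ => ENNReal.ofReal (a j h)) :=
    fun j h => ((measurable_pi_apply h).comp (measurable_pi_apply j)).ennreal_ofReal
  have mCf : ∀ (j : ι), Measurable (fun a : ι → ℕ → ℝ => (1:ℝ≥0∞) - ∑' h, ENNReal.ofReal (a j h)) :=
    fun j => measurable_const.sub (Measurable.ennreal_tsum fun h => mEval j h)
  -- Step 1: rewrite the integral
  have h1 : ∫⁻ ω, P j ω A * P k ω A ∂Pr = ∫⁻ ω,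
      ((∑' h, ∑' l, (W π j h ω * chi θ A h ω) * (W π k l ω * chi θ A l ω))
      + ((∑' h, W π j h ω * chi θ A h ω) * (CC π k ω * q)
      + ((CC π j ω * q) * (∑' l, W π k l ω * chi θ A l ω)
      + (CC π j ω * q) * (CC π k ω * q)))) ∂Pr := by
    refine lintegral_congr_ae ?_
    filter_upwards [apply_eq hP j hA, apply_eq hP k hA] with ω e₁ e₂
    rw [e₁, e₂, expand_mul]
  rw [h1]
  rw [lintegral_add_left mdtsum, lintegral_add_left ((mSum j).fun_mul ((measCC hP k).mul_const _)),
    lintegral_add_left (((measCC hP j).mul_const _).fun_mul (mSum k))]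
  -- T1
  have hT1 : ∫⁻ ω, (∑' h, ∑' l, (W π j h ω * chi θ A h ω) * (W π k l ω * chi θ A l ω)) ∂Pr
      = (∫⁻ ω, SS π j ω * SS π k ω ∂Pr) * (q * q)
        + (∑' h, ∫⁻ ω, W π j h ω * W π k h ω ∂Pr) * (q - q * q) := by
    rw [lintegral_tsum (fun h => (Measurable.ennreal_tsum fun l =>
      (mWchi j h).fun_mul (mWchi k l)).aemeasurable)]
    have hhl : ∀ h l, ∫⁻ ω, (W π j h ω * chi θ A h ω) * (W π k l ω * chi θ A l ω) ∂Pr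
        = (∫⁻ ω, W π j h ω * W π k l ω ∂Pr)
            * (q * q + (if h = l then q - q * q else 0)) := by
      intro h l
      have rearr : (fun ω => (W π j h ω * chi θ A h ω) * (W π k l ω * chi θ A l ω))
          = fun ω => (W π j h ω * W π k l ω) * (chi θ A h ω * chi θ A l ω) := by
        funext ω; ring
      rw [rearr]
      have := indep_lint hP (fun a => ENNReal.ofReal (a j h) * ENNReal.ofReal (a k l))
        (fun x => A.indicator 1 (x h) * A.indicator 1 (x l))
        ((mEval j h).fun_mul (mEval k l))
        (((measurable_one.indicator hA).comp (measurable_pi_apply h)).fun_mul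
          ((measurable_one.indicator hA).comp (measurable_pi_apply l)))
      rw [show (∫⁻ ω, (W π j h ω * W π k l ω) * (chi θ A h ω * chi θ A l ω) ∂Pr)
        = ∫⁻ ω, (fun a : ι → ℕ → ℝ => ENNReal.ofReal (a j h) * ENNReal.ofReal (a k l))
            (fun j h => π j h ω) *
          (fun x : ℕ → 𝕏 => A.indicator 1 (x h) * A.indicator 1 (x l))
            (fun h => θ h ω) ∂Pr from rfl, this]
      rw [show (∫⁻ ω, (fun x : ℕ → 𝕏 => A.indicator 1 (x h) * A.indicator 1 (x l))
          (fun h => θ h ω) ∂Pr) = ∫⁻ ω, chi θ A h ω * chi θ A l ω ∂Pr from rfl,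
        Echichi hP hA h l]
      rfl
    calc ∑' h, ∫⁻ ω, (∑' l, (W π j h ω * chi θ A h ω) * (W π k l ω * chi θ A l ω)) ∂Pr
        = ∑' (h : ℕ) (l : ℕ), ∫⁻ ω,
            (W π j h ω * chi θ A h ω) * (W π k l ω * chi θ A l ω) ∂Pr :=
          tsum_congr fun h => lintegral_tsum fun l => ((mWchi j h).fun_mul (mWchi k l)).aemeasurable
      _ = ∑' (h : ℕ) (l : ℕ), ((∫⁻ ω, W π j h ω * W π k l ω ∂Pr) * (q * q)
            + (if l = h then (∫⁻ ω, W π j h ω * W π k h ω ∂Pr) * (q - q * q) else 0)) := by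
          refine tsum_congr fun h => tsum_congr fun l => ?_
          rw [hhl h l, mul_add]
          congr 1
          rcases eq_or_ne l h with rfl | hne
          · simp
          · simp [hne, (Ne.symm hne)]
      _ = ∑' (h : ℕ), ((∑' (l : ℕ), (∫⁻ ω, W π j h ω * W π k l ω ∂Pr) * (q * q))
            + (∫⁻ ω, W π j h ω * W π k h ω ∂Pr) * (q - q * q)) := by
          refine tsum_congr fun h => ?_
          rw [ENNReal.tsum_add, tsum_ite_eq]
      _ = (∑' (h : ℕ) (l : ℕ), (∫⁻ ω, W π j h ω * W π k l ω ∂Pr)) * (q * q)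
            + (∑' h, ∫⁻ ω, W π j h ω * W π k h ω ∂Pr) * (q - q * q) := by
          rw [ENNReal.tsum_add, ENNReal.tsum_mul_right]
          congr 1
          rw [← ENNReal.tsum_mul_right]
          exact tsum_congr fun h => ENNReal.tsum_mul_right
      _ = (∫⁻ ω, SS π j ω * SS π k ω ∂Pr) * (q * q)
            + (∑' h, ∫⁻ ω, W π j h ω * W π k h ω ∂Pr) * (q - q * q) := by
          congr 1
          have : ∀ h, ∑' l, ∫⁻ ω, W π j h ω * W π k l ω ∂Pr
              = ∫⁻ ω, W π j h ω * SS π k ω ∂Pr := by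
            intro h
            rw [← lintegral_tsum (fun l => ((mW j h).fun_mul (mW k l)).aemeasurable)]
            exact lintegral_congr fun ω => ENNReal.tsum_mul_left
          rw [tsum_congr this,
            ← lintegral_tsum (fun h => ((mW j h).fun_mul (measSS hP k)).aemeasurable)]
          congr 1
          exact lintegral_congr fun ω => ENNReal.tsum_mul_right
  -- T2
  have hT2 : ∫⁻ ω, (∑' h, W π j h ω * chi θ A h ω) * (CC π k ω * q) ∂Pr
      = (∫⁻ ω, SS π j ω * CC π k ω ∂Pr) * (q * q) := by
    have e : (fun ω => (∑' h, W π j h ω * chi θ A h ω) * (CC π k ω * q))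
        = fun ω => ∑' h, ((W π j h ω * CC π k ω) * chi θ A h ω) * q := by
      funext ω
      rw [← ENNReal.tsum_mul_right]
      exact tsum_congr fun h => by ring
    rw [e, lintegral_tsum (fun h =>
      ((((mW j h).fun_mul (measCC hP k)).fun_mul (mChi h)).mul_const _).aemeasurable)]
    have hterm : ∀ h, ∫⁻ ω, ((W π j h ω * CC π k ω) * chi θ A h ω) * q ∂Pr
        = (∫⁻ ω, W π j h ω * CC π k ω ∂Pr) * q * q := by
      intro h
      rw [lintegral_mul_const _ (((mW j h).fun_mul (measCC hP k)).fun_mul (mChi h))]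
      congr 1
      have := indep_lint hP
        (fun a => ENNReal.ofReal (a j h) * ((1:ℝ≥0∞) - ∑' l, ENNReal.ofReal (a k l)))
        (fun x => A.indicator 1 (x h))
        ((mEval j h).fun_mul (mCf k))
        ((measurable_one.indicator hA).comp (measurable_pi_apply h))
      rw [show (∫⁻ ω, (W π j h ω * CC π k ω) * chi θ A h ω ∂Pr) = ∫⁻ ω,
        (fun a : ι → ℕ → ℝ => ENNReal.ofReal (a j h) *
          ((1:ℝ≥0∞) - ∑' l, ENNReal.ofReal (a k l))) (fun j h => π j h ω) *
        (fun x : ℕ → 𝕏 => A.indicator 1 (x h)) (fun h => θ h ω) ∂Pr from rfl, this]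
      rw [show (∫⁻ ω, (fun x : ℕ → 𝕏 => A.indicator 1 (x h)) (fun h => θ h ω) ∂Pr)
        = ∫⁻ ω, chi θ A h ω ∂Pr from rfl, Echi hP hA h]
      rfl
    rw [tsum_congr hterm]
    rw [show (∑' h, (∫⁻ ω, W π j h ω * CC π k ω ∂Pr) * q * q)
      = (∑' h, ∫⁻ ω, W π j h ω * CC π k ω ∂Pr) * (q * q) from by
        rw [← mul_assoc, ENNReal.tsum_mul_right, ENNReal.tsum_mul_right, mul_assoc]]
    congr 1
    rw [← lintegral_tsum (fun h => ((mW j h).fun_mul (measCC hP k)).aemeasurable)]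
    exact lintegral_congr fun ω => ENNReal.tsum_mul_right
  -- T3
  have hT3 : ∫⁻ ω, (CC π j ω * q) * (∑' l, W π k l ω * chi θ A l ω) ∂Pr
      = (∫⁻ ω, CC π j ω * SS π k ω ∂Pr) * (q * q) := by
    have e : (fun ω => (CC π j ω * q) * (∑' l, W π k l ω * chi θ A l ω))
        = fun ω => ∑' l, ((CC π j ω * W π k l ω) * chi θ A l ω) * q := by
      funext ω
      rw [← ENNReal.tsum_mul_left]
      exact tsum_congr fun l => by ring
    rw [e, lintegral_tsum (fun l =>
      ((((measCC hP j).fun_mul (mW k l)).fun_mul (mChi l)).mul_const _).aemeasurable)]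
    have hterm : ∀ l, ∫⁻ ω, ((CC π j ω * W π k l ω) * chi θ A l ω) * q ∂Pr
        = (∫⁻ ω, CC π j ω * W π k l ω ∂Pr) * q * q := by
      intro l
      rw [lintegral_mul_const _ (((measCC hP j).fun_mul (mW k l)).fun_mul (mChi l))]
      congr 1
      have := indep_lint hP
        (fun a => ((1:ℝ≥0∞) - ∑' h, ENNReal.ofReal (a j h)) * ENNReal.ofReal (a k l))
        (fun x => A.indicator 1 (x l))
        ((mCf j).fun_mul (mEval k l))
        ((measurable_one.indicator hA).comp (measurable_pi_apply l))
      rw [show (∫⁻ ω, (CC π j ω * W π k l ω) * chi θ A l ω ∂Pr) = ∫⁻ ω,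
        (fun a : ι → ℕ → ℝ => ((1:ℝ≥0∞) - ∑' h, ENNReal.ofReal (a j h)) *
          ENNReal.ofReal (a k l)) (fun j h => π j h ω) *
        (fun x : ℕ → 𝕏 => A.indicator 1 (x l)) (fun h => θ h ω) ∂Pr from rfl, this]
      rw [show (∫⁻ ω, (fun x : ℕ → 𝕏 => A.indicator 1 (x l)) (fun h => θ h ω) ∂Pr)
        = ∫⁻ ω, chi θ A l ω ∂Pr from rfl, Echi hP hA l]
      rfl
    rw [tsum_congr hterm]
    rw [show (∑' l, (∫⁻ ω, CC π j ω * W π k l ω ∂Pr) * q * q)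
      = (∑' l, ∫⁻ ω, CC π j ω * W π k l ω ∂Pr) * (q * q) from by
        rw [← mul_assoc, ENNReal.tsum_mul_right, ENNReal.tsum_mul_right, mul_assoc]]
    congr 1
    rw [← lintegral_tsum (fun l => ((measCC hP j).fun_mul (mW k l)).aemeasurable)]
    exact lintegral_congr fun ω => ENNReal.tsum_mul_left
  -- T4
  have hT4 : ∫⁻ ω, (CC π j ω * q) * (CC π k ω * q) ∂Pr
      = (∫⁻ ω, CC π j ω * CC π k ω ∂Pr) * (q * q) := by
    have e : (fun ω => (CC π j ω * q) * (CC π k ω * q))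
        = fun ω => (CC π j ω * CC π k ω) * (q * q) := by
      funext ω; ring
    rw [e, lintegral_mul_const _ ((measCC hP j).fun_mul (measCC hP k))]
  rw [hT1, hT2, hT3, hT4]
  -- combine
  have hcomb : (∫⁻ ω, SS π j ω * SS π k ω ∂Pr) * (q * q)
      + (∑' h, ∫⁻ ω, W π j h ω * W π k h ω ∂Pr) * (q - q * q)
      + ((∫⁻ ω, SS π j ω * CC π k ω ∂Pr) * (q * q)
      + ((∫⁻ ω, CC π j ω * SS π k ω ∂Pr) * (q * q)
      + (∫⁻ ω, CC π j ω * CC π k ω ∂Pr) * (q * q)))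
      = (∫⁻ ω, (SS π j ω * SS π k ω + (SS π j ω * CC π k ω
          + (CC π j ω * SS π k ω + CC π j ω * CC π k ω))) ∂Pr) * (q * q)
        + (∑' h, ∫⁻ ω, W π j h ω * W π k h ω ∂Pr) * (q - q * q) := by
    rw [lintegral_add_left ((measSS hP j).fun_mul (measSS hP k)),
      lintegral_add_left ((measSS hP j).fun_mul (measCC hP k)),
      lintegral_add_left ((measCC hP j).fun_mul (measSS hP k))]
    ring
  rw [hcomb]
  have hone : ∫⁻ ω, (SS π j ω * SS π k ω + (SS π j ω * CC π k ω
      + (CC π j ω * SS π k ω + CC π j ω * CC π k ω))) ∂Pr = 1 := by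
    have : ∀ᵐ ω ∂Pr, (SS π j ω * SS π k ω + (SS π j ω * CC π k ω
        + (CC π j ω * SS π k ω + CC π j ω * CC π k ω))) = 1 := by
      filter_upwards [SS_le_one hP j, SS_le_one hP k] with ω h₁ h₂
      have e : SS π j ω * SS π k ω + (SS π j ω * CC π k ω
          + (CC π j ω * SS π k ω + CC π j ω * CC π k ω))
          = (SS π j ω + CC π j ω) * (SS π k ω + CC π k ω) := by ring
      rw [e, CC, CC, add_tsub_cancel_of_le h₁, add_tsub_cancel_of_le h₂, one_mul]
    rw [lintegral_congr_ae this, lintegral_one, measure_univ]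
  rw [hone, one_mul, mul_comm (q - q * q)]


lemma measurableSet_diag {𝕏 : Type*} [MeasurableSpace 𝕏] [StandardBorelSpace 𝕏] :
    MeasurableSet {p : 𝕏 × 𝕏 | p.1 = p.2} := by
  letI := upgradeStandardBorel 𝕏
  exact isClosed_diagonal.measurableSet

lemma prod_diag_eq {𝕏 : Type*} [MeasurableSpace 𝕏] [StandardBorelSpace 𝕏]
    (μ ν : Measure 𝕏) [SFinite ν] :
    (μ.prod ν) {p : 𝕏 × 𝕏 | p.1 = p.2} = ∫⁻ x, ν {x} ∂μ := by
  rw [Measure.prod_apply measurableSet_diag]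
  congr 1
  funext x
  congr 1
  ext y
  simp [eq_comm]

lemma theta_distinct [IsProbabilityMeasure Pr] [IsProbabilityMeasure P₀] [NullSingletonClass P₀]
    [StandardBorelSpace 𝕏] (hP : IsMSSPwith Pr P₀ P π θ) :
    ∀ᵐ ω ∂Pr, ∀ h l : ℕ, h ≠ l → θ h ω ≠ θ l ω := by
  have pair : ∀ h l : ℕ, h ≠ l → Pr {ω | θ h ω = θ l ω} = 0 := by
    intro h l hne
    have hind : IndepFun (θ h) (θ l) Pr := hP.iidθ.indepFun hne
    have hmap : Pr.map (fun ω => (θ h ω, θ l ω)) = P₀.prod P₀ := by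
      have h2 := (indepFun_iff_map_prod_eq_prod_map_map (hP.measθ h).aemeasurable
        (hP.measθ l).aemeasurable).mp hind
      rw [hP.lawθ h, hP.lawθ l] at h2
      exact h2
    have : Pr {ω | θ h ω = θ l ω} = (P₀.prod P₀) {p : 𝕏 × 𝕏 | p.1 = p.2} := by
      rw [← hmap, Measure.map_apply ((hP.measθ h).prodMk (hP.measθ l)) measurableSet_diag]
      rfl
    rw [this, prod_diag_eq]
    simp [measure_singleton]
  have key : ∀ᵐ ω ∂Pr, ∀ p : ℕ × ℕ, p.1 ≠ p.2 → θ p.1 ω ≠ θ p.2 ω := by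
    rw [ae_all_iff]
    intro p
    by_cases hp : p.1 = p.2
    · filter_upwards with ω h; exact absurd hp h
    · have : ∀ᵐ ω ∂Pr, θ p.1 ω ≠ θ p.2 ω := by
        rw [ae_iff]
        convert pair p.1 p.2 hp using 2
        simp
      filter_upwards [this] with ω hω _
      exact hω
  filter_upwards [key] with ω hω h l hne
  exact hω (h, l) hne

lemma mix_prod_diag {𝕏 : Type*} [MeasurableSpace 𝕏] [StandardBorelSpace 𝕏]
    (P₀ : Measure 𝕏) [IsProbabilityMeasure P₀] [NullSingletonClass P₀]
    (w v : ℕ → ℝ) (a : ℕ → 𝕏) (hdist : ∀ h l : ℕ, h ≠ l → a h ≠ a l) :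
    ∫⁻ x, (mixM P₀ v a) {x} ∂(mixM P₀ w a)
      = ∑' h, ENNReal.ofReal (w h) * ENNReal.ofReal (v h) := by
  have hsing : ∀ x : 𝕏, (mixM P₀ v a) {x}
      = ∑' l, ENNReal.ofReal (v l) * Set.indicator {a l} (1 : 𝕏 → ℝ≥0∞) x := by
    intro x
    have : (mixM P₀ v a) {x} = ∑' l, ENNReal.ofReal (v l) * ({x} : Set 𝕏).indicator 1 (a l)
        + ENNReal.ofReal (1 - ∑' l, v l) * P₀ {x} := by
      simp [mixM, Measure.sum_apply _ (measurableSet_singleton x), Measure.smul_apply,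
        smul_eq_mul, Measure.dirac_apply' _ (measurableSet_singleton x)]
    rw [this, measure_singleton, mul_zero, add_zero]
    refine tsum_congr fun l => ?_
    congr 1
    by_cases hx : a l = x
    · subst hx; simp
    · rw [Set.indicator_of_notMem (by simpa using hx),
        Set.indicator_of_notMem (by simpa using Ne.symm hx)]
  have hF : Measurable fun x => ∑' l, ENNReal.ofReal (v l) *
      Set.indicator {a l} (1 : 𝕏 → ℝ≥0∞) x :=
    Measurable.ennreal_tsum fun l =>
      (measurable_one.indicator (measurableSet_singleton (a l))).const_mul _
  simp_rw [hsing]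
  rw [show mixM P₀ w a = Measure.sum (fun h => ENNReal.ofReal (w h) • Measure.dirac (a h)) +
    ENNReal.ofReal (1 - ∑' h, w h) • P₀ from rfl]
  rw [lintegral_add_measure, lintegral_sum_measure]
  have h1 : ∀ h : ℕ, ∫⁻ x, (∑' l, ENNReal.ofReal (v l) *
      Set.indicator {a l} (1 : 𝕏 → ℝ≥0∞) x) ∂(ENNReal.ofReal (w h) • Measure.dirac (a h))
      = ENNReal.ofReal (w h) * ENNReal.ofReal (v h) := by
    intro h
    rw [lintegral_smul_measure, lintegral_dirac' _ hF]
    congr 1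
    have : ∀ l : ℕ, ENNReal.ofReal (v l) * Set.indicator {a l} (1 : 𝕏 → ℝ≥0∞) (a h)
        = if l = h then ENNReal.ofReal (v h) else 0 := by
      intro l
      rcases eq_or_ne l h with rfl | hne
      · simp
      · rw [Set.indicator_of_notMem (by simpa using hdist h l (Ne.symm hne)), mul_zero,
          if_neg hne]
    rw [tsum_congr this, tsum_ite_eq]
  have h2 : ∫⁻ x, (∑' l, ENNReal.ofReal (v l) *
      Set.indicator {a l} (1 : 𝕏 → ℝ≥0∞) x) ∂(ENNReal.ofReal (1 - ∑' h, w h) • P₀) = 0 := by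
    rw [lintegral_smul_measure]
    have : ∫⁻ x, (∑' l, ENNReal.ofReal (v l) *
        Set.indicator {a l} (1 : 𝕏 → ℝ≥0∞) x) ∂P₀ = 0 := by
      rw [lintegral_tsum (fun l => ((measurable_one.indicator
        (measurableSet_singleton (a l))).const_mul _).aemeasurable)]
      have : ∀ l : ℕ, ∫⁻ x, ENNReal.ofReal (v l) *
          Set.indicator {a l} (1 : 𝕏 → ℝ≥0∞) x ∂P₀ = 0 := by
        intro l
        rw [lintegral_const_mul _ (measurable_one.indicator (measurableSet_singleton (a l))),
          lintegral_indicator_one (measurableSet_singleton (a l)), measure_singleton, mul_zero]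
      rw [tsum_congr this]
      simp
    rw [this, smul_zero]
  rw [tsum_congr h1, h2, add_zero]


lemma tie_prob [IsProbabilityMeasure Pr] [IsProbabilityMeasure P₀] [NullSingletonClass P₀]
    [StandardBorelSpace 𝕏] (hP : IsMSSPwith Pr P₀ P π θ) {X : ι → ℕ → Ω → 𝕏}
    (hX : IsSample Pr P X) (p₁ p₂ : ι × ℕ) (hne : p₁ ≠ p₂) :
    Pr {ω | X p₁.1 p₁.2 ω = X p₂.1 p₂.2 ω}
      = ∑' h, ∫⁻ ω, W π p₁.1 h ω * W π p₂.1 h ω ∂Pr := by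
  classical
  obtain ⟨j, i⟩ := p₁
  obtain ⟨k, i'⟩ := p₂
  -- kernels
  let κ₁ : Kernel Ω 𝕏 := ⟨fun ω => P j ω,
    Measure.measurable_of_measurable_coe _ fun s hs => hP.measP j s hs⟩
  let κ₂ : Kernel Ω 𝕏 := ⟨fun ω => P k ω,
    Measure.measurable_of_measurable_coe _ fun s hs => hP.measP k s hs⟩
  haveI : IsMarkovKernel κ₁ := ⟨fun ω => hP.probP j ω⟩
  haveI : IsMarkovKernel κ₂ := ⟨fun ω => hP.probP k ω⟩
  have hpairm : Measurable fun ω => (X j i ω, X k i' ω) :=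
    (hX.1 j i).prodMk (hX.1 k i')
  haveI : IsProbabilityMeasure (Pr.map fun ω => (X j i ω, X k i' ω)) :=
    Measure.isProbabilityMeasure_map hpairm.aemeasurable
  haveI : IsProbabilityMeasure (Pr.bind ⇑(κ₁ ×ₖ κ₂)) := by
    constructor
    rw [Measure.bind_apply MeasurableSet.univ (κ₁ ×ₖ κ₂).measurable.aemeasurable]
    simp
  -- the two joint laws coincide
  have hlaw : Pr.map (fun ω => (X j i ω, X k i' ω)) = Pr.bind ⇑(κ₁ ×ₖ κ₂) := by
    refine ext_of_generate_finite _ generateFrom_prod.symm isPiSystem_prod ?_ (by simp)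
    rintro s ⟨A, hA, B, hB, rfl⟩
    simp only [Set.mem_setOf_eq] at hA hB
    rw [Measure.map_apply hpairm (hA.prod hB),
      Measure.bind_apply (hA.prod hB) (κ₁ ×ₖ κ₂).measurable.aemeasurable]
    have hpre : (fun ω => (X j i ω, X k i' ω)) ⁻¹' (A ×ˢ B)
        = {ω | ∀ p ∈ ({(j, i), (k, i')} : Finset (ι × ℕ)), X p.1 p.2 ω ∈
            (if p = (j, i) then A else B)} := by
      ext ω
      simp only [Set.mem_preimage, Set.mem_prod, Set.mem_setOf_eq, Finset.mem_insert,
        Finset.mem_singleton]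
      constructor
      · rintro ⟨h₁, h₂⟩ p hp
        rcases hp with rfl | rfl
        · simpa using h₁
        · rw [if_neg (Ne.symm hne)]; exact h₂
      · intro hp
        refine ⟨?_, ?_⟩
        · have := hp (j, i) (Or.inl rfl); simpa using this
        · have := hp (k, i') (Or.inr rfl); rwa [if_neg (Ne.symm hne)] at this
    rw [hpre, hX.2 _ _ (by intro p hp; split_ifs <;> [exact hA; exact hB])]
    refine lintegral_congr fun ω => ?_
    rw [Finset.prod_pair hne]
    rw [if_pos rfl, if_neg (Ne.symm hne)]
    rw [Kernel.prod_apply, Measure.prod_prod]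
    rfl
  -- compute the diagonal mass
  have hdiagset : {ω | X j i ω = X k i' ω}
      = (fun ω => (X j i ω, X k i' ω)) ⁻¹' {p : 𝕏 × 𝕏 | p.1 = p.2} := rfl
  rw [hdiagset, ← Measure.map_apply hpairm measurableSet_diag, hlaw,
    Measure.bind_apply measurableSet_diag (κ₁ ×ₖ κ₂).measurable.aemeasurable]
  have hae : ∀ᵐ ω ∂Pr, (κ₁ ×ₖ κ₂) ω {p : 𝕏 × 𝕏 | p.1 = p.2}
      = ∑' h, W π j h ω * W π k h ω := by
    filter_upwards [hP.repr j, hP.repr k, theta_distinct hP] with ω h₁ h₂ h₃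
    rw [Kernel.prod_apply]
    show (P j ω).prod (P k ω) {p : 𝕏 × 𝕏 | p.1 = p.2} = _
    haveI := hP.probP j ω
    haveI := hP.probP k ω
    rw [prod_diag_eq, h₁, h₂, mix_prod_diag P₀ _ _ _ (fun h l hhl => h₃ h l hhl)]
    rfl
  rw [lintegral_congr_ae hae,
    lintegral_tsum fun h => ((measW hP j h).fun_mul (measW hP k h)).aemeasurable]


lemma covR_eq [IsProbabilityMeasure Pr] [IsProbabilityMeasure P₀]
    (hP : IsMSSPwith Pr P₀ P π θ) (j k : ι) {A : Set 𝕏} (hA : MeasurableSet A) :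
    covR Pr (fun ω => (P j ω A).toReal) (fun ω => (P k ω A).toReal)
      = ((P₀ A).toReal - (P₀ A).toReal * (P₀ A).toReal)
        * (∑' h, ∫⁻ ω, W π j h ω * W π k h ω ∂Pr).toReal := by
  set q := P₀ A with hqdef
  set R := ∑' h, ∫⁻ ω, W π j h ω * W π k h ω ∂Pr with hRdef
  have hg : ∀ j : ι, Measurable fun ω => P j ω A := fun j => hP.measP j A hA
  have hle1 : ∀ (j : ι) ω, P j ω A ≤ 1 := fun j ω => by
    haveI := hP.probP j ω; exact prob_le_one
  have hlt : ∀ j : ι, ∀ᵐ ω ∂Pr, P j ω A < ∞ :=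
    fun j => ae_of_all _ fun ω => lt_of_le_of_lt (hle1 j ω) ENNReal.one_lt_top
  have hq1 : q ≤ 1 := prob_le_one
  have hqt : q ≠ ∞ := (lt_of_le_of_lt hq1 ENNReal.one_lt_top).ne
  have hEf : ∀ j : ι, ∫ ω, (P j ω A).toReal ∂Pr = q.toReal := by
    intro j
    rw [integral_toReal (hg j).aemeasurable (hlt j), Emean hP j hA]
  have hfin : (q - q * q) * R ≠ ∞ := by
    have hb : ∫⁻ ω, P j ω A * P k ω A ∂Pr ≤ 1 := by
      calc ∫⁻ ω, P j ω A * P k ω A ∂Pr ≤ ∫⁻ _, 1 ∂Pr :=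
            lintegral_mono fun ω => mul_le_one' (hle1 j ω) (hle1 k ω)
        _ = 1 := by simp
    rw [Emul hP j k hA] at hb
    exact (lt_of_le_of_lt (le_trans le_add_self hb) ENNReal.one_lt_top).ne
  have hEfg : ∫ ω, (P j ω A).toReal * (P k ω A).toReal ∂Pr
      = q.toReal * q.toReal + (q.toReal - q.toReal * q.toReal) * R.toReal := by
    have e : (fun ω => (P j ω A).toReal * (P k ω A).toReal)
        = fun ω => ((P j ω A) * (P k ω A)).toReal := by
      funext ω; rw [ENNReal.toReal_mul]
    rw [e, integral_toReal ((hg j).fun_mul (hg k)).aemeasurable ?hlt2]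
    case hlt2 =>
      filter_upwards [hlt j, hlt k] with ω h₁ h₂
      exact ENNReal.mul_lt_top h₁ h₂
    rw [Emul hP j k hA, ENNReal.toReal_add (by
        exact ENNReal.mul_ne_top hqt hqt) hfin, ENNReal.toReal_mul, ENNReal.toReal_mul,
      ENNReal.toReal_sub_of_le (mul_le_of_le_one_right (zero_le (a := q)) hq1) hqt,
      ENNReal.toReal_mul]
  rw [covR, hEfg, hEf j, hEf k]
  ring


lemma var_eq_covR [IsProbabilityMeasure Pr] (hP : IsMSSPwith Pr P₀ P π θ) (j : ι)
    {A : Set 𝕏} (hA : MeasurableSet A) :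
    variance (fun ω => (P j ω A).toReal) Pr
      = covR Pr (fun ω => (P j ω A).toReal) (fun ω => (P j ω A).toReal) := by
  have hmeas : Measurable fun ω => (P j ω A).toReal :=
    ENNReal.measurable_toReal.comp (hP.measP j A hA)
  have hmem : MemLp (fun ω => (P j ω A).toReal) 2 Pr := by
    refine MemLp.of_bound hmeas.aestronglyMeasurable 1 (ae_of_all _ fun ω => ?_)
    rw [Real.norm_eq_abs, abs_of_nonneg ENNReal.toReal_nonneg]
    haveI := hP.probP j ω
    simpa using ENNReal.toReal_mono ENNReal.one_ne_top (prob_le_one (μ := P j ω) (s := A))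
  rw [variance_eq_sub hmem, covR]
  congr 1
  · exact integral_congr_ae (ae_of_all _ fun ω => by simp [pow_two])
  · rw [pow_two]


lemma integral_pi_mul_eq (hP : IsMSSPwith Pr P₀ P π θ) (j k : ι) (h : ℕ) :
    ∫ ω, π j h ω * π k h ω ∂Pr = (∫⁻ ω, W π j h ω * W π k h ω ∂Pr).toReal := by
  have hnn : 0 ≤ᵐ[Pr] fun ω => π j h ω * π k h ω := by
    filter_upwards [hP.subprob j, hP.subprob k] with ω h1 h2
    exact mul_nonneg ((h1.1 h).1) ((h2.1 h).1)
  rw [integral_eq_lintegral_of_nonneg_ae hnn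
    ((hP.measπ j h).fun_mul (hP.measπ k h)).aestronglyMeasurable]
  congr 1
  refine lintegral_congr_ae ?_
  filter_upwards [hP.subprob j] with ω h1
  rw [ENNReal.ofReal_mul ((h1.1 h).1)]
  rfl

end Aux

/-- Properties of the correlation between `P j (A)` and `P k (A)` for a
multivariate species sampling process: it is nonnegative; it vanishes iff the across-group tie
probability vanishes, iff `E[π_{j,h} π_{k,h}] = 0` for every `h`; and when the two within-group
tie probabilities coincide and are positive it equals the ratio of the across- to within-group
tie probabilities. -/
theorem mSSP_correlation_properties {Ω : Type*} [MeasurableSpace Ω] {𝕏 : Type*}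
    [MeasurableSpace 𝕏] [StandardBorelSpace 𝕏] {ι : Type*}
    (Pr : Measure Ω) [IsProbabilityMeasure Pr]
    (P₀ : Measure 𝕏) [IsProbabilityMeasure P₀] [NullSingletonClass P₀]
    (P : ι → Ω → Measure 𝕏) (π : ι → ℕ → Ω → ℝ) (θ : ℕ → Ω → 𝕏)
    (hP : IsMSSPwith Pr P₀ P π θ)
    (X : ι → ℕ → Ω → 𝕏) (hX : IsSample Pr P X)
    (j k : ι) (hjk : j ≠ k) (A : Set 𝕏) (hA : MeasurableSet A)
    (hVj : 0 < variance (fun ω => (P j ω A).toReal) Pr)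
    (hVk : 0 < variance (fun ω => (P k ω A).toReal) Pr) :
    (0 ≤ corrR Pr (fun ω => (P j ω A).toReal) (fun ω => (P k ω A).toReal)) ∧
    (corrR Pr (fun ω => (P j ω A).toReal) (fun ω => (P k ω A).toReal) = 0 ↔
      Pr {ω | X j 0 ω = X k 0 ω} = 0) ∧
    (Pr {ω | X j 0 ω = X k 0 ω} = 0 ↔
      ∀ h : ℕ, ∫ ω, π j h ω * π k h ω ∂Pr = 0) ∧
    (Pr {ω | X j 0 ω = X j 1 ω} = Pr {ω | X k 0 ω = X k 1 ω} →
      0 < Pr {ω | X j 0 ω = X j 1 ω} →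
      corrR Pr (fun ω => (P j ω A).toReal) (fun ω => (P k ω A).toReal)
        = (Pr {ω | X j 0 ω = X k 0 ω}).toReal / (Pr {ω | X j 0 ω = X j 1 ω}).toReal) := by
  classical
  -- abbreviations
  set c : ℝ := (P₀ A).toReal - (P₀ A).toReal * (P₀ A).toReal with hc_def
  have hcov := covR_eq hP j k hA
  have hcovjj := covR_eq hP j j hA
  have hcovkk := covR_eq hP k k hA
  have hvarj := (var_eq_covR hP j hA).trans hcovjj
  have hvark := (var_eq_covR hP k hA).trans hcovkk
  -- tie probabilities
  have tjk : Pr {ω | X j 0 ω = X k 0 ω}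
      = ∑' h, ∫⁻ ω, W π j h ω * W π k h ω ∂Pr := by
    have := tie_prob hP hX (j, 0) (k, 0) (by simp [Prod.ext_iff, hjk])
    exact this
  have tjj : Pr {ω | X j 0 ω = X j 1 ω}
      = ∑' h, ∫⁻ ω, W π j h ω * W π j h ω ∂Pr := by
    have := tie_prob hP hX (j, 0) (j, 1) (by simp)
    exact this
  have tkk : Pr {ω | X k 0 ω = X k 1 ω}
      = ∑' h, ∫⁻ ω, W π k h ω * W π k h ω ∂Pr := by
    have := tie_prob hP hX (k, 0) (k, 1) (by simp)
    exact this
  set Rjk := ∑' h, ∫⁻ ω, W π j h ω * W π k h ω ∂Pr with hRjk_def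
  set Rjj := ∑' h, ∫⁻ ω, W π j h ω * W π j h ω ∂Pr with hRjj_def
  set Rkk := ∑' h, ∫⁻ ω, W π k h ω * W π k h ω ∂Pr with hRkk_def
  have hRjk_le : Rjk ≤ 1 := by rw [← tjk]; exact prob_le_one
  have hRjk_top : Rjk ≠ ∞ := (lt_of_le_of_lt hRjk_le ENNReal.one_lt_top).ne
  -- positivity
  have hq1 : (P₀ A).toReal ≤ 1 := by
    simpa using ENNReal.toReal_mono ENNReal.one_ne_top (prob_le_one (μ := P₀) (s := A))
  have hq0 : (0:ℝ) ≤ (P₀ A).toReal := ENNReal.toReal_nonneg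
  have hc0 : 0 ≤ c := by rw [hc_def]; nlinarith
  have h1 : 0 < c * Rjj.toReal := hvarj ▸ hVj
  have h2 : 0 < c * Rkk.toReal := hvark ▸ hVk
  have hcpos : 0 < c := by
    rcases hc0.lt_or_eq with h | h
    · exact h
    · exfalso; rw [← h, zero_mul] at h1; exact lt_irrefl 0 h1
  have hρjj_pos : 0 < Rjj.toReal := by
    rcases (ENNReal.toReal_nonneg (a := Rjj)).lt_or_eq with h | h
    · exact h
    · exfalso; rw [← h, mul_zero] at h1; exact lt_irrefl 0 h1
  refine ⟨?_, ?_, ?_, ?_⟩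
  · -- (i) nonnegativity
    show 0 ≤ covR Pr (fun ω => (P j ω A).toReal) (fun ω => (P k ω A).toReal) /
      (Real.sqrt (variance (fun ω => (P j ω A).toReal) Pr) *
        Real.sqrt (variance (fun ω => (P k ω A).toReal) Pr))
    apply div_nonneg
    · rw [hcov]; exact mul_nonneg hc0 ENNReal.toReal_nonneg
    · exact mul_nonneg (Real.sqrt_nonneg _) (Real.sqrt_nonneg _)
  · -- (ii)
    have hden : Real.sqrt (variance (fun ω => (P j ω A).toReal) Pr) *
        Real.sqrt (variance (fun ω => (P k ω A).toReal) Pr) ≠ 0 :=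
      ne_of_gt (mul_pos (Real.sqrt_pos.mpr hVj) (Real.sqrt_pos.mpr hVk))
    constructor
    · intro h0
      have hcov0 : covR Pr (fun ω => (P j ω A).toReal) (fun ω => (P k ω A).toReal) = 0 := by
        rcases div_eq_zero_iff.mp h0 with h | h
        · exact h
        · exact absurd h hden
      rw [hcov] at hcov0
      have hρ0 : Rjk.toReal = 0 := by
        rcases mul_eq_zero.mp hcov0 with h | h
        · exact absurd h (ne_of_gt hcpos)
        · exact h
      have : Rjk = 0 := by
        rcases (ENNReal.toReal_eq_zero_iff _).mp hρ0 with h | h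
        · exact h
        · exact absurd h hRjk_top
      rw [tjk]; exact this
    · intro h0
      have hR0 : Rjk = 0 := by rw [← tjk]; exact h0
      show covR Pr (fun ω => (P j ω A).toReal) (fun ω => (P k ω A).toReal) /
        (Real.sqrt (variance (fun ω => (P j ω A).toReal) Pr) *
          Real.sqrt (variance (fun ω => (P k ω A).toReal) Pr)) = 0
      rw [hcov, hR0]
      simp
  · -- (iii)
    rw [tjk]
    constructor
    · intro h0 h
      have hterm : (∫⁻ ω, W π j h ω * W π k h ω ∂Pr) = 0 :=
        ENNReal.tsum_eq_zero.mp h0 h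
      rw [integral_pi_mul_eq hP j k h, hterm]
      simp
    · intro hall
      rw [ENNReal.tsum_eq_zero]
      intro h
      have hI := hall h
      rw [integral_pi_mul_eq hP j k h] at hI
      have hIle : ∫⁻ ω, W π j h ω * W π k h ω ∂Pr ≤ 1 :=
        le_trans (ENNReal.le_tsum h) hRjk_le
      rcases (ENNReal.toReal_eq_zero_iff _).mp hI with h' | h'
      · exact h'
      · exact absurd h' (lt_of_le_of_lt hIle ENNReal.one_lt_top).ne
  · -- (iv)
    intro heq _hpos
    have hRR : Rjj = Rkk := by rw [← tjj, ← tkk]; exact heq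
    show covR Pr (fun ω => (P j ω A).toReal) (fun ω => (P k ω A).toReal) /
      (Real.sqrt (variance (fun ω => (P j ω A).toReal) Pr) *
        Real.sqrt (variance (fun ω => (P k ω A).toReal) Pr))
      = (Pr {ω | X j 0 ω = X k 0 ω}).toReal / (Pr {ω | X j 0 ω = X j 1 ω}).toReal
    rw [hcov, hvarj, hvark, ← hRR,
      Real.mul_self_sqrt (mul_nonneg hc0 ENNReal.toReal_nonneg),
      mul_div_mul_left _ _ (ne_of_gt hcpos), tjk, tjj]

end MSSP
end

section
/- Let (P₁,…,P_J) be a proper multivariate species sampling process with non-atomic base measure P₀ and weight array π = (π_{j,h} : j ≤ J, h ≥ 1). Then its partially exchangeable partition probability function satisfies, for every D ≥ 1 and every admissible composition matrix (n_{j,d}): pEPPF_D^{(n)}(n₁,…,n_J) = E[ Σ_{(h₁,…,h_D)} ∏_{j=1}^J ∏_{d=1}^D π_{j,h_d}^{n_{j,d}} ], where the sum runs over all D-tuples (h₁,…,h_D) of pairwise distinct positive integers. -/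
open MeasureTheory ProbabilityTheory
open scoped ENNReal

namespace MSSP

variable {Ω : Type*} [MeasurableSpace Ω] {𝕏 : Type*} [MeasurableSpace 𝕏]

section Aux

lemma measurableSet_eq_pair {𝕏 : Type*} [MeasurableSpace 𝕏] [StandardBorelSpace 𝕏]
    {α : Type*} [MeasurableSpace α] {f g : α → 𝕏}
    (hf : Measurable f) (hg : Measurable g) : MeasurableSet {x | f x = g x} := by
  letI := upgradeStandardBorel 𝕏
  exact StronglyMeasurable.measurableSet_eq_fun hf.stronglyMeasurable hg.stronglyMeasurable

lemma pi_map_discrete {ι : Type*} [Fintype ι] {𝕏 : Type*} [MeasurableSpace 𝕏]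
    (f : ℕ → 𝕏) (hf : Measurable f) (ν : ι → Measure ℕ) [∀ l, IsProbabilityMeasure (ν l)] :
    Measure.pi (fun l => (ν l).map f) = (Measure.pi ν).map (fun g l => f (g l)) := by
  have hmeas : Measurable (fun (g : ι → ℕ) (l : ι) => f (g l)) :=
    measurable_pi_lambda _ fun l => hf.comp (measurable_pi_apply l)
  haveI : ∀ l, IsProbabilityMeasure ((ν l).map f) := fun l =>
    Measure.isProbabilityMeasure_map hf.aemeasurable
  refine Measure.pi_eq fun s hs => ?_
  rw [Measure.map_apply hmeas (MeasurableSet.univ_pi hs)]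
  have hpre : (fun (g : ι → ℕ) l => f (g l)) ⁻¹' Set.pi Set.univ s
      = Set.pi Set.univ (fun l => f ⁻¹' s l) := by
    ext g; simp [Set.mem_pi]
  rw [hpre, Measure.pi_pi]
  exact Finset.prod_congr rfl fun l _ => (Measure.map_apply hf (hs l)).symm

lemma pi_discrete_apply {ι : Type*} [Fintype ι] (ν : ι → Measure ℕ)
    [∀ l, IsProbabilityMeasure (ν l)] (S : Set (ι → ℕ)) :
    Measure.pi ν S = ∑' g : S, ∏ l, ν l {g.1 l} := by
  have hS : MeasurableSet S := (Set.to_countable S).measurableSet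
  rw [← Measure.tsum_indicator_apply_singleton _ S hS,
    ← tsum_subtype S (fun g => Measure.pi ν {g})]
  exact tsum_congr fun g => by rw [← Set.univ_pi_singleton, Measure.pi_pi]

end Aux

/-- The partially exchangeable partition probability function of a vector `P` of random
probability measures, for group sizes `I` and the partition of the labels
`Σ j, Fin (I j)` encoded by the block-assignment map `c`: it is the expected probability, under
the conditional product law of the sample, that the observations are equal exactly according
to the blocks of `c` (i.e. `E[∫_{𝕏^D_*} ∏_d ∏_j P_j(dx_d)^{n_{j,d}}]`). -/
noncomputable def pEPPF {J : ℕ} (Pr : Measure Ω) (P : Fin J → Ω → Measure 𝕏)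
    {I : Fin J → ℕ} {D : ℕ} (c : (Σ j, Fin (I j)) → Fin D) : ℝ≥0∞ :=
  ∫⁻ ω, Measure.pi (fun l : Σ j, Fin (I j) => P l.1 ω)
      {x | ∀ a b : Σ j, Fin (I j), x a = x b ↔ c a = c b} ∂Pr

/-- For a proper multivariate species sampling process with weight array `π`,
the pEPPF is `E[Σ_{h₁ ≠ ⋯ ≠ h_D} ∏_j ∏_d π_{j,h_d}^{n_{j,d}}]`, the sum running over all tuples
of pairwise distinct indices; here `n_{j,d}` is the number of labels of group `j` assigned to
block `d` by `c`. -/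
theorem pEPPF_of_proper_mSSP {Ω : Type*} [MeasurableSpace Ω] {𝕏 : Type*} [MeasurableSpace 𝕏]
    [StandardBorelSpace 𝕏] {J : ℕ}
    (Pr : Measure Ω) [IsProbabilityMeasure Pr]
    (P₀ : Measure 𝕏) [IsProbabilityMeasure P₀] [NullSingletonClass P₀]
    (P : Fin J → Ω → Measure 𝕏) (π : Fin J → ℕ → Ω → ℝ) (θ : ℕ → Ω → 𝕏)
    (hP : IsMSSPwith Pr P₀ P π θ)
    (hproper : ∀ j, ∀ᵐ ω ∂Pr, ∑' h, π j h ω = 1)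
    (I : Fin J → ℕ) (D : ℕ) (c : (Σ j, Fin (I j)) → Fin D) (hc : Function.Surjective c) :
    pEPPF Pr P c
      = ∫⁻ ω, ∑' f : {f : Fin D → ℕ // Function.Injective f},
          ∏ j, ∏ d, ENNReal.ofReal (π j (f.val d) ω)
            ^ (Finset.univ.filter fun i : Fin (I j) => c ⟨j, i⟩ = d).card ∂Pr := by
  classical
  -- θ is a.s. injective
  have hpair : ∀ h k : ℕ, h ≠ k → ∀ᵐ ω ∂Pr, θ h ω ≠ θ k ω := by
    intro h k hhk
    have hind : IndepFun (θ h) (θ k) Pr := hP.iidθ.indepFun hhk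
    have hmap : Measure.map (fun ω => (θ h ω, θ k ω)) Pr
        = (Measure.map (θ h) Pr).prod (Measure.map (θ k) Pr) :=
      (indepFun_iff_map_prod_eq_prod_map_map (hP.measθ h).aemeasurable
        (hP.measθ k).aemeasurable).mp hind
    have hdiag : MeasurableSet {p : 𝕏 × 𝕏 | p.1 = p.2} :=
      measurableSet_eq_pair measurable_fst measurable_snd
    have h0 : Pr {ω | θ h ω = θ k ω} = 0 := by
      have heq : Pr {ω | θ h ω = θ k ω}
          = Measure.map (fun ω => (θ h ω, θ k ω)) Pr {p : 𝕏 × 𝕏 | p.1 = p.2} := by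
        rw [Measure.map_apply ((hP.measθ h).prodMk (hP.measθ k)) hdiag]; rfl
      rw [heq, hmap, hP.lawθ, hP.lawθ, Measure.prod_apply hdiag]
      have hz : ∀ x : 𝕏, P₀ (Prod.mk x ⁻¹' {p : 𝕏 × 𝕏 | p.1 = p.2}) = 0 := by
        intro x
        have : Prod.mk x ⁻¹' {p : 𝕏 × 𝕏 | p.1 = p.2} = {x} := by ext y; simp [eq_comm]
        rw [this]; exact measure_singleton x
      simp [hz]
    rw [ae_iff]; simpa using h0
  have hinj : ∀ᵐ ω ∂Pr, Function.Injective (fun h => θ h ω) := by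
    have hall : ∀ᵐ ω ∂Pr, ∀ h k : ℕ, h ≠ k → θ h ω ≠ θ k ω := by
      rw [ae_all_iff]; intro h; rw [ae_all_iff]; intro k
      by_cases hhk : h = k
      · subst hhk; exact Filter.Eventually.of_forall fun ω hne => absurd rfl hne
      · filter_upwards [hpair h k hhk] with ω hω _; exact hω
    filter_upwards [hall] with ω hω
    intro a b hab
    by_contra hne
    exact hω a b hne hab
  have hgood : ∀ᵐ ω ∂Pr,
      (∀ j, P j ω = mixM P₀ (fun h => π j h ω) (fun h => θ h ω))
      ∧ (∀ j, (∀ h, 0 ≤ π j h ω) ∧ ∑' h, π j h ω = 1)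
      ∧ Function.Injective (fun h => θ h ω) := by
    refine (ae_all_iff.2 hP.repr).and ((ae_all_iff.2 fun j => ?_).and hinj)
    filter_upwards [hP.subprob j, hproper j] with ω h1 h2
    exact ⟨fun h => (h1.1 h).1, h2⟩
  refine lintegral_congr_ae ?_
  filter_upwards [hgood] with ω hω
  obtain ⟨hrepr, hw, hinj'⟩ := hω
  set ν : Fin J → Measure ℕ :=
    fun j => Measure.sum (fun h => ENNReal.ofReal (π j h ω) • Measure.dirac h) with hν
  have hνsing : ∀ (j : Fin J) (h : ℕ), ν j {h} = ENNReal.ofReal (π j h ω) := by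
    intro j h
    rw [hν, Measure.sum_apply _ (measurableSet_singleton h),
      tsum_eq_single h (fun k hk => by simp [Measure.dirac_apply, Set.indicator, hk])]
    simp [Measure.dirac_apply]
  have hsummable : ∀ j : Fin J, Summable (fun h => π j h ω) := by
    intro j
    have ht := (hw j).2
    by_contra hs
    rw [tsum_eq_zero_of_not_summable hs] at ht
    norm_num at ht
  haveI hνprob : ∀ j : Fin J, IsProbabilityMeasure (ν j) := by
    intro j
    constructor
    rw [hν, Measure.sum_apply _ MeasurableSet.univ]
    simp only [Measure.smul_apply, measure_univ, smul_eq_mul, mul_one]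
    rw [← ENNReal.ofReal_tsum_of_nonneg (hw j).1 (hsummable j), (hw j).2,
      ENNReal.ofReal_one]
  haveI : ∀ l : (Σ j : Fin J, Fin (I j)), IsProbabilityMeasure (ν l.1) := fun l => hνprob l.1
  have hf : Measurable (fun h : ℕ => θ h ω) := measurable_from_top
  have hPmap : ∀ j : Fin J, P j ω = (ν j).map (fun h => θ h ω) := by
    intro j
    rw [hrepr j]
    unfold mixM
    rw [(hw j).2, sub_self, ENNReal.ofReal_zero, zero_smul, add_zero, hν,
      Measure.map_sum hf.aemeasurable]
    congr 1
    funext h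
    rw [Measure.map_smul, Measure.map_dirac' hf]
  have hS : MeasurableSet {x : (Σ j : Fin J, Fin (I j)) → 𝕏 | ∀ a b : (Σ j : Fin J, Fin (I j)), x a = x b ↔ c a = c b} := by
    have hrw : {x : (Σ j : Fin J, Fin (I j)) → 𝕏 | ∀ a b : (Σ j : Fin J, Fin (I j)), x a = x b ↔ c a = c b}
        = ⋂ a : (Σ j : Fin J, Fin (I j)), ⋂ b : (Σ j : Fin J, Fin (I j)), {x : (Σ j : Fin J, Fin (I j)) → 𝕏 | x a = x b ↔ c a = c b} := by
      ext x; simp only [Set.mem_iInter, Set.mem_setOf_eq]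
    rw [hrw]
    refine MeasurableSet.iInter fun a => MeasurableSet.iInter fun b => ?_
    rcases eq_or_ne (c a) (c b) with h | h
    · have : {x : (Σ j : Fin J, Fin (I j)) → 𝕏 | x a = x b ↔ c a = c b} = {x | x a = x b} := by
        ext x; simp [h]
      rw [this]
      exact measurableSet_eq_pair (measurable_pi_apply a) (measurable_pi_apply b)
    · have : {x : (Σ j : Fin J, Fin (I j)) → 𝕏 | x a = x b ↔ c a = c b} = {x | x a = x b}ᶜ := by
        ext x; simp [h]
      rw [this]
      exact (measurableSet_eq_pair (measurable_pi_apply a) (measurable_pi_apply b)).compl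
  have hmeas : Measurable (fun (g : (Σ j : Fin J, Fin (I j)) → ℕ) (l : (Σ j : Fin J, Fin (I j))) => θ (g l) ω) :=
    measurable_pi_lambda _ fun l => hf.comp (measurable_pi_apply l)
  have hstep1 : (fun l : (Σ j : Fin J, Fin (I j)) => P l.1 ω) = fun l : (Σ j : Fin J, Fin (I j)) => (ν l.1).map (fun h => θ h ω) :=
    funext fun l => hPmap l.1
  have hpre : (fun (g : (Σ j : Fin J, Fin (I j)) → ℕ) (l : (Σ j : Fin J, Fin (I j))) => θ (g l) ω) ⁻¹'
        {x : (Σ j : Fin J, Fin (I j)) → 𝕏 | ∀ a b : (Σ j : Fin J, Fin (I j)), x a = x b ↔ c a = c b}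
      = {g : (Σ j : Fin J, Fin (I j)) → ℕ | ∀ a b : (Σ j : Fin J, Fin (I j)), g a = g b ↔ c a = c b} := by
    ext g
    simp only [Set.mem_preimage, Set.mem_setOf_eq]
    exact forall_congr' fun a => forall_congr' fun b => by rw [hinj'.eq_iff]
  -- the reindexing equivalence
  let e : {f : Fin D → ℕ // Function.Injective f}
      ≃ {g : (Σ j : Fin J, Fin (I j)) → ℕ | ∀ a b : (Σ j : Fin J, Fin (I j)), g a = g b ↔ c a = c b} :=
    { toFun := fun f => ⟨f.1 ∘ c, fun a b => by
        simp only [Function.comp_apply, f.2.eq_iff]⟩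
      invFun := fun g => ⟨g.1 ∘ Function.surjInv hc, by
        intro d d' hdd'
        have h1 := (g.2 (Function.surjInv hc d) (Function.surjInv hc d')).1 hdd'
        rwa [Function.surjInv_eq hc, Function.surjInv_eq hc] at h1⟩
      left_inv := fun f => Subtype.ext <| funext fun d => by
        simp [Function.surjInv_eq hc]
      right_inv := fun g => Subtype.ext <| funext fun l => by
        exact (g.2 (Function.surjInv hc (c l)) l).2 (Function.surjInv_eq hc (c l)) }
  calc Measure.pi (fun l : (Σ j : Fin J, Fin (I j)) => P l.1 ω)
        {x : (Σ j : Fin J, Fin (I j)) → 𝕏 | ∀ a b : (Σ j : Fin J, Fin (I j)), x a = x b ↔ c a = c b}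
      = (Measure.pi fun l : (Σ j : Fin J, Fin (I j)) => ν l.1).map (fun g l => θ (g l) ω)
          {x : (Σ j : Fin J, Fin (I j)) → 𝕏 | ∀ a b : (Σ j : Fin J, Fin (I j)), x a = x b ↔ c a = c b} := by
        rw [hstep1, pi_map_discrete _ hf]
    _ = Measure.pi (fun l : (Σ j : Fin J, Fin (I j)) => ν l.1)
          {g : (Σ j : Fin J, Fin (I j)) → ℕ | ∀ a b : (Σ j : Fin J, Fin (I j)), g a = g b ↔ c a = c b} := by
        rw [Measure.map_apply hmeas hS, hpre]
    _ = ∑' g : {g : (Σ j : Fin J, Fin (I j)) → ℕ | ∀ a b : (Σ j : Fin J, Fin (I j)), g a = g b ↔ c a = c b},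
          ∏ l : (Σ j : Fin J, Fin (I j)), ν l.1 {g.1 l} := pi_discrete_apply _ _
    _ = ∑' f : {f : Fin D → ℕ // Function.Injective f},
          ∏ l : (Σ j : Fin J, Fin (I j)), ν l.1 {(e f).1 l} :=
        (Equiv.tsum_eq e (fun g => ∏ l : (Σ j : Fin J, Fin (I j)), ν l.1 {g.1 l})).symm
    _ = ∑' f : {f : Fin D → ℕ // Function.Injective f},
          ∏ j, ∏ d, ENNReal.ofReal (π j (f.val d) ω)
            ^ (Finset.univ.filter fun i : Fin (I j) => c ⟨j, i⟩ = d).card := by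
        refine tsum_congr fun f => ?_
        have h1 : ∀ l : (Σ j : Fin J, Fin (I j)), ν l.1 {(e f).1 l} = ENNReal.ofReal (π l.1 (f.1 (c l)) ω) :=
          fun l => hνsing l.1 (f.1 (c l))
        rw [Finset.prod_congr rfl fun l _ => h1 l]
        rw [← Finset.univ_sigma_univ, Finset.prod_sigma]
        refine Finset.prod_congr rfl fun j _ => ?_
        rw [← Finset.prod_fiberwise' Finset.univ (fun i : Fin (I j) => c ⟨j, i⟩)
          (fun d => ENNReal.ofReal (π j (f.1 d) ω))]
        exact Finset.prod_congr rfl fun d _ => Finset.prod_const _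


end MSSP
end
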